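/- arXiv:2112.06860 — 5 statements merged into one kernel-verified Lean document; each statement's English description precedes it below -/
import Mathlib

section
/- Let κ and λ be nonzero integers of opposite sign and set N := min(|κ|, |λ|). Then for every w ∈ ℂ such that w + |κ+λ|/2 + m ≠ 0 for every integer m with 0 ≤ m < N, one has ζ_ℂ(w + (|κ|+|λ|)/2) = (2π)^{−N} · (∏_{m=0}^{N−1} (w + |κ+λ|/2 + m)) · ζ_ℂ(w + |κ+λ|/2). (This is the identity proved in the paper's Proposition on naïve Rankin–Selberg L-functions, in the case F = ℂ with π = e^{iκ·arg}|·|_ℂ^t, σ = e^{iλ·arg}|·|_ℂ^u, sgn(κ) ≠ sgn(λ), and w = s + t + u; it expresses L(s, π_ur × σ_ur) as an explicit polynomial multiple of L(s, π × σ).) -/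
open MeasureTheory

/-- The real zeta factor `ζ_ℝ(s) = π^{-s/2} Γ(s/2)`. -/
noncomputable def zetaR (s : ℂ) : ℂ :=
  (Real.pi : ℂ) ^ (-s / 2) * Complex.Gamma (s / 2)

/-- The complex zeta factor `ζ_ℂ(s) = 2 (2π)^{-s} Γ(s)`. -/
noncomputable def zetaC (s : ℂ) : ℂ :=
  2 * (2 * (Real.pi : ℂ)) ^ (-s) * Complex.Gamma s

/-- The multiplicative Haar measure `d×x = dx/|x|` on `ℝˣ = ℝ ∖ {0}`. -/
noncomputable def mulHaarR : Measure ℝ :=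
  volume.withDensity fun x => ENNReal.ofReal (1 / |x|)

/-- The multiplicative Haar measure `d×z = (2/π) dA(z)/|z|²` on `ℂˣ`. -/
noncomputable def mulHaarC : Measure ℂ :=
  volume.withDensity fun z => ENNReal.ofReal (2 / (Real.pi * ‖z‖ ^ 2))

/-- The complex power `|x|^w = exp(w log |x|)` for `x ∈ ℝ`. -/
noncomputable def cpowR (x : ℝ) (w : ℂ) : ℂ :=
  Complex.exp (w * (Real.log |x| : ℂ))

/-- The complex power `|z|_ℂ^w = exp(w log |z|²)` for `z ∈ ℂ`. -/
noncomputable def cpowC (z : ℂ) (w : ℂ) : ℂ :=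
  Complex.exp (w * (Real.log (‖z‖ ^ 2) : ℂ))

lemma gamma_shift (s : ℂ) : ∀ N : ℕ, (∀ m : ℕ, m < N → s + m ≠ 0) →
    Complex.Gamma (s + N) = (∏ m ∈ Finset.range N, (s + m)) * Complex.Gamma s := by
  intro N
  induction N with
  | zero => simp
  | succ n ih =>
    intro h
    have h1 : s + (n : ℂ) ≠ 0 := h n (by omega)
    have he : (s + ((n+1 : ℕ) : ℂ)) = (s + n) + 1 := by push_cast; ring
    rw [he, Complex.Gamma_add_one _ h1, ih (fun m hm => h m (by omega)),
      Finset.prod_range_succ]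
    ring

lemma zetaC_shift (s : ℂ) (N : ℕ) (h : ∀ m : ℕ, m < N → s + m ≠ 0) :
    zetaC (s + N) = (2 * (Real.pi : ℂ)) ^ (-(N : ℤ)) *
      (∏ m ∈ Finset.range N, (s + m)) * zetaC s := by
  have h2 : (2 * (Real.pi : ℂ)) ≠ 0 := by
    simp [Real.pi_ne_zero]
  unfold zetaC
  rw [gamma_shift s N h]
  rw [show -(s + (N:ℂ)) = -(N:ℂ) + (-s) by ring, Complex.cpow_add _ _ h2]
  rw [show ((2 * (Real.pi : ℂ)) ^ (-(N : ℤ)) : ℂ) = (2 * (Real.pi : ℂ)) ^ (-(N:ℂ)) by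
    rw [zpow_neg, zpow_natCast, ← Complex.cpow_natCast, ← Complex.cpow_neg]]
  ring

/-- For nonzero integers `κ, λ` of opposite sign and `N = min(|κ|, |λ|)`, if
`w + |κ+λ|/2 + m ≠ 0` for all `0 ≤ m < N`, then
`ζ_ℂ(w + (|κ|+|λ|)/2) = (2π)^{-N} ∏_{m=0}^{N-1} (w + |κ+λ|/2 + m) · ζ_ℂ(w + |κ+λ|/2)`. -/
theorem stmt_2 (κ l : ℤ) (hκ : κ ≠ 0) (hl : l ≠ 0) (hsign : κ * l < 0) (w : ℂ)
    (hw : ∀ m : ℕ, m < min κ.natAbs l.natAbs →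
      w + ((|κ + l| : ℤ) : ℂ) / 2 + (m : ℂ) ≠ 0) :
    zetaC (w + ((κ.natAbs : ℂ) + (l.natAbs : ℂ)) / 2) =
      (2 * (Real.pi : ℂ)) ^ (-(min κ.natAbs l.natAbs : ℤ)) *
        (∏ m ∈ Finset.range (min κ.natAbs l.natAbs),
          (w + ((|κ + l| : ℤ) : ℂ) / 2 + (m : ℂ))) *
        zetaC (w + ((|κ + l| : ℤ) : ℂ) / 2) := by
  set N := min κ.natAbs l.natAbs with hN
  have hint : (κ.natAbs : ℤ) + l.natAbs = |κ + l| + 2 * N := by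
    rcases mul_neg_iff.mp hsign with ⟨h1, h2⟩ | ⟨h1, h2⟩ <;>
      simp only [hN, Int.abs_eq_natAbs] <;> omega
  have harg : w + ((κ.natAbs : ℂ) + (l.natAbs : ℂ)) / 2 =
      (w + ((|κ + l| : ℤ) : ℂ) / 2) + (N : ℂ) := by
    have : ((κ.natAbs : ℂ) + (l.natAbs : ℂ)) = ((|κ + l| : ℤ) : ℂ) + 2 * N := by
      have hc := congrArg (fun n : ℤ => (n : ℂ)) hint
      simpa only [Int.cast_add, Int.cast_mul, Int.cast_natCast, Int.cast_ofNat,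
        Int.cast_two] using hc
    rw [this]; ring
  rw [harg, zetaC_shift _ N (fun m hm => hw m hm)]
  have hcast : ((κ.natAbs : ℤ) ⊓ (l.natAbs : ℤ)) = (N : ℤ) := by omega
  rw [hcast]
end

section
/- Let κ, λ ≥ 1 be integers, set μ := min(κ, λ) and ν := |κ−λ|/2 (a rational number, possibly a half-integer), and note (κ+λ)/2 = ν + μ. Then for every w ∈ ℂ such that (w + ν)/2 + m ≠ 0 for every integer m with 0 ≤ m < ⌈μ/2⌉ and (w + ν + 1)/2 + m ≠ 0 for every integer m with 0 ≤ m < ⌊μ/2⌋, one has ζ_ℝ(w + (κ+λ)/2) · ζ_ℝ(w + (κ+λ)/2 + 1) = π^{−μ} · (∏_{m=0}^{⌈μ/2⌉−1} ((w + ν)/2 + m)) · (∏_{m=0}^{⌊μ/2⌋−1} ((w + ν + 1)/2 + m)) · ζ_ℝ(w + ν) · ζ_ℝ(w + ν + 1). (This is the identity proved in the paper's Proposition on naïve Rankin–Selberg L-functions in the case F = ℝ, π = D_κ ⊗ |det|^t, σ = D_λ ⊗ |det|^u, with w = s + t + u.) -/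
open MeasureTheory

lemma Gamma_shift (z : ℂ) (n : ℕ) (h : ∀ m : ℕ, m < n → z + (m : ℂ) ≠ 0) :
    Complex.Gamma (z + n) = (∏ m ∈ Finset.range n, (z + (m : ℂ))) * Complex.Gamma z := by
  induction n with
  | zero => simp
  | succ n ih =>
    rw [Finset.prod_range_succ]
    have h1 : z + ((n + 1 : ℕ) : ℂ) = (z + n) + 1 := by push_cast; ring
    rw [h1, Complex.Gamma_add_one _ (h n (Nat.lt_succ_self n)),
      ih (fun m hm => h m (hm.trans (Nat.lt_succ_self n)))]
    ring

lemma zetaR_mul_shift (s : ℂ) (n1 n2 : ℕ)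
    (h1 : ∀ m : ℕ, m < n1 → s / 2 + (m : ℂ) ≠ 0)
    (h2 : ∀ m : ℕ, m < n2 → (s + 1) / 2 + (m : ℂ) ≠ 0) :
    zetaR (s + 2 * (n1 : ℂ)) * zetaR (s + 1 + 2 * (n2 : ℂ)) =
      (Real.pi : ℂ) ^ (-((n1 : ℤ) + n2)) *
        (∏ m ∈ Finset.range n1, (s / 2 + (m : ℂ))) *
        (∏ m ∈ Finset.range n2, ((s + 1) / 2 + (m : ℂ))) *
        zetaR s * zetaR (s + 1) := by
  have hpi : (Real.pi : ℂ) ≠ 0 := by exact_mod_cast Real.pi_ne_zero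
  unfold zetaR
  have e1 : (s + 2 * (n1 : ℂ)) / 2 = s / 2 + n1 := by ring
  have e2 : (s + 1 + 2 * (n2 : ℂ)) / 2 = (s + 1) / 2 + n2 := by ring
  rw [e1, e2, Gamma_shift _ _ h1, Gamma_shift _ _ h2]
  rw [show -(s + 2 * (n1 : ℂ)) / 2 = -(n1 : ℂ) + -s / 2 by ring,
    show -(s + 1 + 2 * (n2 : ℂ)) / 2 = -(n2 : ℂ) + -(s + 1) / 2 by ring,
    Complex.cpow_add _ _ hpi, Complex.cpow_add _ _ hpi,
    ← Complex.cpow_intCast,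
    show ((-((n1 : ℤ) + n2) : ℤ) : ℂ) = -(n1 : ℂ) + -(n2 : ℂ) by push_cast; ring,
    Complex.cpow_add _ _ hpi]
  ring

/-- For integers `κ, λ ≥ 1`, with `μ = min(κ, λ)` and `ν = |κ-λ|/2`, assuming the
non-vanishing hypotheses, one has
`ζ_ℝ(w + (κ+λ)/2) ζ_ℝ(w + (κ+λ)/2 + 1) = π^{-μ} ∏_{m=0}^{⌈μ/2⌉-1} ((w+ν)/2 + m)
  ∏_{m=0}^{⌊μ/2⌋-1} ((w+ν+1)/2 + m) ζ_ℝ(w + ν) ζ_ℝ(w + ν + 1)`. -/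
theorem stmt_4 (κ l : ℕ) (hκ : 1 ≤ κ) (hl : 1 ≤ l) (w : ℂ)
    (μ : ℕ) (hμ : μ = min κ l)
    (ν : ℂ) (hν : ν = ((|(κ : ℤ) - (l : ℤ)| : ℤ) : ℂ) / 2)
    (hw1 : ∀ m : ℕ, m < (μ + 1) / 2 → (w + ν) / 2 + (m : ℂ) ≠ 0)
    (hw2 : ∀ m : ℕ, m < μ / 2 → (w + ν + 1) / 2 + (m : ℂ) ≠ 0) :
    zetaR (w + ((κ : ℂ) + (l : ℂ)) / 2) * zetaR (w + ((κ : ℂ) + (l : ℂ)) / 2 + 1) =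
      (Real.pi : ℂ) ^ (-(μ : ℤ)) *
        (∏ m ∈ Finset.range ((μ + 1) / 2), ((w + ν) / 2 + (m : ℂ))) *
        (∏ m ∈ Finset.range (μ / 2), ((w + ν + 1) / 2 + (m : ℂ))) *
        zetaR (w + ν) * zetaR (w + ν + 1) := by
  have hsum : ν + (μ : ℂ) = ((κ : ℂ) + l) / 2 := by
    rcases le_total κ l with h | h
    · have ha : |(κ : ℤ) - (l : ℤ)| = (l : ℤ) - κ := by
        rw [abs_of_nonpos (by exact_mod_cast sub_nonpos.mpr (Int.ofNat_le.mpr h))]; ring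
      rw [hν, hμ, min_eq_left h, ha]
      push_cast
      ring
    · have ha : |(κ : ℤ) - (l : ℤ)| = (κ : ℤ) - l := by
        rw [abs_of_nonneg (by exact_mod_cast sub_nonneg.mpr (Int.ofNat_le.mpr h))]
      rw [hν, hμ, min_eq_right h, ha]
      push_cast
      ring
  set s := w + ν with hs
  rcases Nat.even_or_odd μ with hpar | hpar
  · obtain ⟨k, hk⟩ := hpar
    have hn1 : (μ + 1) / 2 = k := by omega
    have hn2 : μ / 2 = k := by omega
    have hμk : (μ : ℤ) = (k : ℤ) + k := by omega
    have harg1 : w + ((κ : ℂ) + l) / 2 = s + 2 * (k : ℂ) := by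
      rw [← hsum, hs]; push_cast [hk]; ring
    have harg2 : w + ((κ : ℂ) + l) / 2 + 1 = s + 1 + 2 * (k : ℂ) := by
      rw [harg1]; ring
    rw [harg2, harg1, hn1, hn2, show (-(μ : ℤ)) = -((k : ℤ) + k) by omega]
    exact zetaR_mul_shift s k k (hn1 ▸ hw1) (hn2 ▸ hw2)
  · obtain ⟨k, hk⟩ := hpar
    have hn1 : (μ + 1) / 2 = k + 1 := by omega
    have hn2 : μ / 2 = k := by omega
    have harg1 : w + ((κ : ℂ) + l) / 2 = s + 1 + 2 * (k : ℂ) := by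
      rw [← hsum, hs]; push_cast [hk]; ring
    have harg2 : w + ((κ : ℂ) + l) / 2 + 1 = s + 2 * ((k + 1 : ℕ) : ℂ) := by
      rw [harg1]; push_cast; ring
    rw [harg2, harg1, hn1, hn2, show (-(μ : ℤ)) = -(((k + 1 : ℕ) : ℤ) + k) by omega,
      mul_comm (zetaR (s + 1 + 2 * (k : ℂ)))]
    exact zetaR_mul_shift s (k + 1) k (hn1 ▸ hw1) (hn2 ▸ hw2)
end

section
/- Let t₁, t₂, s ∈ ℂ with Re(s + 2t₁) > 0, Re(s + 2t₂) > 0, and Re(s + t₁ + t₂) > 0. Then the triple integral 2·∫_{ℝˣ}∫_{ℝˣ}∫_{ℝˣ} |a₁|^{s+2t₁} · |a₂|^{s+2t₁} · |c|^{2(t₂−t₁)} · exp(−π a₂² − 2π c²/a₂² − 2π a₁²/c²) d×c d×a₁ d×a₂ converges absolutely and equals ζ_ℝ(s + 2t₁) · ζ_ℝ(s + 2t₂) · ζ_ℂ(s + t₁ + t₂). (This is the case n = 2 of the paper's theorem that the Flicker integral of the spherical Whittaker function of GL_n(ℂ) equals the Asai L-function L(s, π, As), made fully explicit for π = |·|_ℂ^{t₁}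 ⊞ |·|_ℂ^{t₂} via the paper's propagation formula.) -/
open MeasureTheory

/-- The integrand of the `n = 2` complex Flicker integral, in the variables
`p = (a₁, a₂, c)`:
`|a₁|^{s+2t₁} |a₂|^{s+2t₁} |c|^{2(t₂-t₁)} exp(-π a₂² - 2π c²/a₂² - 2π a₁²/c²)`. -/
noncomputable def flickerIntegrand2 (s t₁ t₂ : ℂ) (p : ℝ × ℝ × ℝ) : ℂ :=
  cpowR p.1 (s + 2 * t₁) * cpowR p.2.1 (s + 2 * t₁) * cpowR p.2.2 (2 * (t₂ - t₁)) *
    (Real.exp (-Real.pi * p.2.1 ^ 2 - 2 * Real.pi * (p.2.2 ^ 2 / p.2.1 ^ 2)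
      - 2 * Real.pi * (p.1 ^ 2 / p.2.2 ^ 2)) : ℂ)

open Set Complex
open scoped ENNReal NNReal

lemma map_withDensity_equiv {α β : Type*} [MeasurableSpace α] [MeasurableSpace β]
    (μ : Measure α) (e : α ≃ᵐ β) (f : β → ℝ≥0∞) :
    Measure.map e (μ.withDensity fun x => f (e x)) = (Measure.map e μ).withDensity f := by
  ext s hs
  rw [Measure.map_apply e.measurable hs, withDensity_apply _ (e.measurable hs),
    withDensity_apply _ hs, Measure.restrict_map e.measurable hs, lintegral_map_equiv]

lemma map_mul_right_mulHaarR {c : ℝ} (hc : c ≠ 0) :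
    Measure.map (fun x : ℝ => x * c) mulHaarR = mulHaarR := by
  let e : ℝ ≃ᵐ ℝ := (Homeomorph.mulRight₀ c hc).toMeasurableEquiv
  have he : ⇑e = fun x : ℝ => x * c := rfl
  have hD : (fun x : ℝ => ENNReal.ofReal (1 / |x|)) =
      fun x => (fun y => ENNReal.ofReal (|c| / |y|)) (e x) := by
    funext x
    rcases eq_or_ne x 0 with rfl | hx
    · simp [he]
    · rw [he]
      congr 1
      rw [abs_mul]
      field_simp
  rw [mulHaarR]
  conv_lhs => rw [hD, ← he]
  rw [map_withDensity_equiv volume e fun y => ENNReal.ofReal (|c| / |y|), he, Real.map_volume_mul_right hc]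
  have h2 : (fun y : ℝ => ENNReal.ofReal (|c| / |y|)) =
      fun y => ENNReal.ofReal |c| * ENNReal.ofReal (1 / |y|) := by
    funext y; rw [← ENNReal.ofReal_mul (abs_nonneg c), mul_one_div]
  rw [h2, withDensity_smul_measure,
    show (fun y : ℝ => ENNReal.ofReal |c| * ENNReal.ofReal (1 / |y|)) =
      (ENNReal.ofReal |c|) • (fun y : ℝ => ENNReal.ofReal (1 / |y|)) from funext fun y => rfl]
  rw [withDensity_smul _ (by fun_prop), smul_smul, ← ENNReal.ofReal_mul (abs_nonneg _),
    abs_inv, inv_mul_cancel₀ (abs_ne_zero.mpr hc), ENNReal.ofReal_one, one_smul]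

instance : SigmaFinite mulHaarR := by
  unfold mulHaarR; infer_instance

lemma ae_ne_zero_mulHaarR : ∀ᵐ x ∂mulHaarR, x ≠ 0 :=
  (withDensity_absolutelyContinuous volume _).ae_le
    (by simp [ae_iff, measure_singleton] : ∀ᵐ x : ℝ ∂volume, x ≠ 0)

lemma integrable_mulHaarR_iff (g : ℝ → ℂ) :
    Integrable g mulHaarR ↔ Integrable (fun x => (1 / |x|) • g x) volume := by
  rw [mulHaarR,
    show (fun x : ℝ => ENNReal.ofReal (1 / |x|)) =
      fun x => ((Real.toNNReal (1 / |x|) : ℝ≥0) : ℝ≥0∞) from rfl,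
    integrable_withDensity_iff_integrable_smul (by fun_prop)]
  constructor <;> intro h <;> refine h.congr (ae_of_all _ fun x => ?_) <;>
    simp [NNReal.smul_def, Real.coe_toNNReal _ (by positivity : (0:ℝ) ≤ 1 / |x|)]

lemma integral_mulHaarR (g : ℝ → ℂ) :
    ∫ x, g x ∂mulHaarR = ∫ x, (1 / |x|) • g x := by
  rw [mulHaarR,
    show (fun x : ℝ => ENNReal.ofReal (1 / |x|)) =
      fun x => ((Real.toNNReal (1 / |x|) : ℝ≥0) : ℝ≥0∞) from rfl,
    integral_withDensity_eq_integral_smul (by fun_prop)]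
  congr 1; funext x
  simp [NNReal.smul_def, Real.coe_toNNReal _ (by positivity : (0:ℝ) ≤ 1 / |x|)]

lemma integrable_comp_abs' {f : ℝ → ℂ} (hf : IntegrableOn f (Ioi 0)) :
    Integrable fun x => f |x| := by
  have hf' : IntegrableOn (fun x => f |x|) (Ioi 0) := by
    refine hf.congr_fun (fun x hx => ?_) measurableSet_Ioi
    rw [abs_eq_self.mpr (le_of_lt (by exact hx))]
  have int_Iic : IntegrableOn (fun x ↦ f |x|) (Iic 0) := by
    rw [← Measure.map_neg_eq_self (volume : Measure ℝ)]
    have m : MeasurableEmbedding fun x : ℝ => -x := (Homeomorph.neg ℝ).measurableEmbedding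
    rw [m.integrableOn_map_iff]
    simp_rw [Function.comp_def, abs_neg, neg_preimage, neg_Iic, neg_zero]
    exact Iff.mpr integrableOn_Ici_iff_integrableOn_Ioi hf'
  have := int_Iic.union hf'
  rwa [Iic_union_Ioi, integrableOn_univ] at this

lemma integral_comp_abs' (f : ℝ → ℂ) :
    ∫ x, f |x| = 2 * ∫ x in Ioi (0 : ℝ), f x := by
  have eq : ∫ (x : ℝ) in Ioi 0, f |x| = ∫ (x : ℝ) in Ioi 0, f x := by
    refine setIntegral_congr_fun measurableSet_Ioi (fun _ hx => ?_)
    rw [abs_eq_self.mpr (le_of_lt (by exact hx))]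
  by_cases hf : IntegrableOn (fun x => f |x|) (Ioi 0)
  · have int_Iic : IntegrableOn (fun x ↦ f |x|) (Iic 0) := by
      rw [← Measure.map_neg_eq_self (volume : Measure ℝ)]
      have m : MeasurableEmbedding fun x : ℝ => -x := (Homeomorph.neg ℝ).measurableEmbedding
      rw [m.integrableOn_map_iff]
      simp_rw [Function.comp_def, abs_neg, neg_preimage, neg_Iic, neg_zero]
      exact Iff.mpr integrableOn_Ici_iff_integrableOn_Ioi hf
    calc
      _ = (∫ x in Iic 0, f |x|) + ∫ x in Ioi 0, f |x| := by
        rw [← setIntegral_union (Iic_disjoint_Ioi le_rfl) measurableSet_Ioi int_Iic hf,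
          Iic_union_Ioi, Measure.restrict_univ]
      _ = 2 * ∫ x in Ioi 0, f x := by
        rw [two_mul, eq]
        congr! 1
        rw [← neg_zero, ← integral_comp_neg_Iic, neg_zero]
        refine setIntegral_congr_fun measurableSet_Iic (fun _ hx => ?_)
        rw [abs_eq_neg_self.mpr (by exact hx)]
  · have : ¬ Integrable (fun x => f |x|) := by
      contrapose! hf
      exact hf.integrableOn
    rw [← eq, integral_undef hf, integral_undef this, mul_zero]

lemma gauss_aux {w : ℂ} (hw : 0 < w.re) {b : ℝ} (hb : 0 < b) :
    IntegrableOn (fun y : ℝ => (y : ℂ) ^ (w - 1) * (Real.exp (-(b * y ^ 2)) : ℂ)) (Ioi 0) ∧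
      ∫ y in Ioi (0 : ℝ), (y : ℂ) ^ (w - 1) * (Real.exp (-(b * y ^ 2)) : ℂ) =
        (2 : ℝ)⁻¹ • ((b : ℂ) ^ (-(w / 2)) • Complex.Gamma (w / 2)) := by
  have hwre : 0 < (w / 2).re := by
    rw [show (2 : ℂ) = ((2 : ℝ) : ℂ) by norm_num, Complex.div_ofReal_re]
    positivity
  constructor
  · have hre := integrableOn_rpow_mul_exp_neg_mul_sq hb (s := w.re - 1) (by linarith)
    refine Integrable.mono' hre ?_ ?_
    · refine (ContinuousOn.mul ?_ ?_).aestronglyMeasurable measurableSet_Ioi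
      · apply continuousOn_of_forall_continuousAt
        intro x hx
        exact ContinuousAt.comp
          (continuousAt_cpow_const <| ofReal_mem_slitPlane.2 hx)
          continuous_ofReal.continuousAt
      · fun_prop
    · rw [ae_restrict_iff' measurableSet_Ioi]
      filter_upwards with y hy
      refine le_of_eq ?_
      rw [norm_mul,
        Complex.norm_cpow_eq_rpow_re_of_pos hy, Complex.norm_real, Real.norm_eq_abs,
        _root_.abs_of_nonneg (Real.exp_pos _).le, Complex.sub_re, Complex.one_re, neg_mul]
  · have h2 := mellin_comp_rpow (E := ℂ)
      (fun u : ℝ => ((Real.exp (-(b * u)) : ℝ) : ℂ)) w 2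
    have h1 : (∫ y in Ioi (0 : ℝ), (y : ℂ) ^ (w - 1) * (Real.exp (-(b * y ^ 2)) : ℂ)) =
        mellin (fun t : ℝ => (fun u : ℝ => ((Real.exp (-(b * u)) : ℝ) : ℂ)) (t ^ (2 : ℝ))) w := by
      rw [mellin]
      refine setIntegral_congr_fun measurableSet_Ioi fun t ht => ?_
      rw [smul_eq_mul,
        show t ^ (2 : ℝ) = t ^ 2 from by
          rw [show (2 : ℝ) = ((2 : ℕ) : ℝ) by norm_num, Real.rpow_natCast]]
    rw [h1, h2]
    have h3 : mellin (fun u : ℝ => ((Real.exp (-(b * u)) : ℝ) : ℂ)) (w / ((2 : ℝ) : ℂ)) =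
        (b : ℂ) ^ (-(w / ((2 : ℝ) : ℂ))) •
          mellin (fun v : ℝ => ((Real.exp (-v) : ℝ) : ℂ)) (w / ((2 : ℝ) : ℂ)) :=
      mellin_comp_mul_left (fun v : ℝ => ((Real.exp (-v) : ℝ) : ℂ)) _ hb
    rw [h3]
    have hg : mellin (fun v : ℝ => ((Real.exp (-v) : ℝ) : ℂ)) (w / ((2 : ℝ) : ℂ)) =
        Complex.Gamma (w / 2) := by
      rw [show ((2 : ℝ) : ℂ) = (2 : ℂ) by norm_num, Complex.Gamma_eq_integral hwre,
        Complex.GammaIntegral, mellin]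
      exact setIntegral_congr_fun measurableSet_Ioi fun t ht => by
        rw [smul_eq_mul, mul_comm]
    rw [hg, show |(2 : ℝ)|⁻¹ = (2 : ℝ)⁻¹ by norm_num,
      show -(w / ((2 : ℝ) : ℂ)) = -(w / 2) by norm_num]

lemma gauss_main {w : ℂ} (hw : 0 < w.re) {b : ℝ} (hb : 0 < b) :
    Integrable (fun x : ℝ => cpowR x w * (Real.exp (-(b * x ^ 2)) : ℂ)) mulHaarR ∧
      ∫ x, cpowR x w * (Real.exp (-(b * x ^ 2)) : ℂ) ∂mulHaarR =
        (b : ℂ) ^ (-(w / 2)) * Complex.Gamma (w / 2) := by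
  set φ : ℝ → ℂ := fun y =>
    (1 / y) • (Complex.exp (w * (Real.log y : ℂ)) * (Real.exp (-(b * y ^ 2)) : ℂ)) with hφ
  have hcomp : (fun x : ℝ =>
      (1 / |x|) • (cpowR x w * (Real.exp (-(b * x ^ 2)) : ℂ))) = fun x => φ |x| := by
    funext x
    simp only [hφ, cpowR, _root_.sq_abs]
  have hIoi : EqOn φ
      (fun y : ℝ => (y : ℂ) ^ (w - 1) * (Real.exp (-(b * y ^ 2)) : ℂ)) (Ioi 0) := by
    intro y hy
    have hy0 : (0 : ℝ) < y := hy
    have hlog : Complex.exp (w * (Real.log y : ℂ)) = (y : ℂ) ^ w := by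
      rw [Complex.cpow_def_of_ne_zero (ofReal_ne_zero.mpr hy0.ne'), ← Complex.ofReal_log hy0.le,
        mul_comm]
    have hsub : (y : ℂ) ^ (w - 1) = (y : ℂ) ^ w * ((y : ℂ))⁻¹ := by
      rw [Complex.cpow_sub _ _ (ofReal_ne_zero.mpr hy0.ne'), Complex.cpow_one, div_eq_mul_inv]
    simp only [hφ, hlog, hsub, smul_eq_mul, Complex.real_smul]
    push_cast
    field_simp
  have hint : IntegrableOn φ (Ioi 0) :=
    (gauss_aux hw hb).1.congr_fun (fun y hy => (hIoi hy).symm) measurableSet_Ioi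
  constructor
  · rw [integrable_mulHaarR_iff, hcomp]
    exact integrable_comp_abs' hint
  · rw [integral_mulHaarR, hcomp, integral_comp_abs' φ, setIntegral_congr_fun measurableSet_Ioi
      hIoi, (gauss_aux hw hb).2, Complex.real_smul, smul_eq_mul]
    push_cast
    ring

lemma cpowR_mul {x y : ℝ} (hx : x ≠ 0) (hy : y ≠ 0) (w : ℂ) :
    cpowR (x * y) w = cpowR x w * cpowR y w := by
  rw [cpowR, cpowR, cpowR, abs_mul,
    Real.log_mul (abs_ne_zero.mpr hx) (abs_ne_zero.mpr hy), ofReal_add, mul_add,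
    Complex.exp_add]

lemma cpowR_add (x : ℝ) (u v : ℂ) : cpowR x (u + v) = cpowR x u * cpowR x v := by
  rw [cpowR, cpowR, cpowR, add_mul, Complex.exp_add]

lemma flicker_point (s t₁ t₂ : ℂ) {x y z : ℝ} (hx : x ≠ 0) (hy : y ≠ 0) (hz : z ≠ 0) :
    flickerIntegrand2 s t₁ t₂ (x * (z * y), y, z * y) =
      (cpowR x (s + 2 * t₁) * (Real.exp (-(2 * Real.pi * x ^ 2)) : ℂ)) *
        ((cpowR y (2 * (s + t₁ + t₂)) * (Real.exp (-(Real.pi * y ^ 2)) : ℂ)) *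
          (cpowR z (s + 2 * t₂) * (Real.exp (-(2 * Real.pi * z ^ 2)) : ℂ))) := by
  have hzy : z * y ≠ 0 := mul_ne_zero hz hy
  have e1 : (z * y) ^ 2 / y ^ 2 = z ^ 2 := by field_simp [mul_pow]
  have e2 : (x * (z * y)) ^ 2 / (z * y) ^ 2 = x ^ 2 := by field_simp [mul_pow]
  have e3 : Real.exp (-Real.pi * y ^ 2 - 2 * Real.pi * z ^ 2 - 2 * Real.pi * x ^ 2) =
      Real.exp (-(Real.pi * y ^ 2)) * Real.exp (-(2 * Real.pi * z ^ 2)) *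
        Real.exp (-(2 * Real.pi * x ^ 2)) := by
    rw [← Real.exp_add, ← Real.exp_add]; ring_nf
  rw [flickerIntegrand2]
  simp only
  rw [e1, e2, e3, cpowR_mul hx hzy, cpowR_mul hz hy,
    cpowR_mul hz hy (2 * (t₂ - t₁))]
  simp only [cpowR, Complex.ofReal_exp, Complex.ofReal_mul, ← Complex.exp_add]
  congr 1
  push_cast
  ring

lemma mulHaarR_zero : mulHaarR {0} = 0 :=
  (withDensity_absolutelyContinuous volume _) (measure_singleton 0)

lemma psi_pres : MeasurePreserving
    (fun p : ℝ × ℝ × ℝ => (p.1 * (p.2.2 * p.2.1), p.2.1, p.2.2 * p.2.1))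
    (mulHaarR.prod (mulHaarR.prod mulHaarR)) (mulHaarR.prod (mulHaarR.prod mulHaarR)) := by
  have τpres : MeasurePreserving (fun q : ℝ × ℝ => (q.1, q.2 * q.1))
      (mulHaarR.prod mulHaarR) (mulHaarR.prod mulHaarR) := by
    refine (MeasurePreserving.id mulHaarR).skew_product (g := fun y z => z * y)
      (measurable_snd.mul measurable_fst) ?_
    filter_upwards [ae_ne_zero_mulHaarR] with y hy
    exact map_mul_right_mulHaarR hy
  have Ψ₂ : MeasurePreserving (Prod.map (id : ℝ → ℝ) (fun q : ℝ × ℝ => (q.1, q.2 * q.1)))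
      (mulHaarR.prod (mulHaarR.prod mulHaarR)) (mulHaarR.prod (mulHaarR.prod mulHaarR)) :=
    (MeasurePreserving.id mulHaarR).prod τpres
  have σpres : MeasurePreserving (fun q : (ℝ × ℝ) × ℝ => (q.1, q.2 * q.1.2))
      ((mulHaarR.prod mulHaarR).prod mulHaarR) ((mulHaarR.prod mulHaarR).prod mulHaarR) := by
    refine (MeasurePreserving.id (mulHaarR.prod mulHaarR)).skew_product
      (g := fun a x => x * a.2) (measurable_snd.mul (measurable_snd.comp measurable_fst)) ?_
    have h0 : ∀ᵐ a : ℝ × ℝ ∂(mulHaarR.prod mulHaarR), a.2 ≠ 0 := by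
      rw [ae_iff]
      have : {a : ℝ × ℝ | ¬ a.2 ≠ 0} = (univ : Set ℝ) ×ˢ ({0} : Set ℝ) := by
        ext ⟨a1, a2⟩; simp [eq_comm]
      rw [this, Measure.prod_prod, mulHaarR_zero, mul_zero]
    filter_upwards [h0] with a ha
    exact map_mul_right_mulHaarR ha
  have Ψ₁ : MeasurePreserving
      ((Prod.swap ∘ fun q : (ℝ × ℝ) × ℝ => (q.1, q.2 * q.1.2)) ∘ Prod.swap)
      (mulHaarR.prod (mulHaarR.prod mulHaarR)) (mulHaarR.prod (mulHaarR.prod mulHaarR)) :=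
    ((Measure.measurePreserving_swap).comp σpres).comp (Measure.measurePreserving_swap)
  exact Ψ₁.comp Ψ₂

/-- For `Re(s + 2t₁) > 0`, `Re(s + 2t₂) > 0`, `Re(s + t₁ + t₂) > 0`, the triple integral
`2 ∫∫∫ |a₁|^{s+2t₁} |a₂|^{s+2t₁} |c|^{2(t₂-t₁)} e^{-π a₂² - 2π c²/a₂² - 2π a₁²/c²}
  d×c d×a₁ d×a₂` converges absolutely and equals `ζ_ℝ(s+2t₁) ζ_ℝ(s+2t₂) ζ_ℂ(s+t₁+t₂)`. -/
theorem stmt_5 (t₁ t₂ s : ℂ) (h₁ : 0 < (s + 2 * t₁).re) (h₂ : 0 < (s + 2 * t₂).re)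
    (h₃ : 0 < (s + t₁ + t₂).re) :
    Integrable (flickerIntegrand2 s t₁ t₂) (mulHaarR.prod (mulHaarR.prod mulHaarR)) ∧
      2 * ∫ p : ℝ × ℝ × ℝ, flickerIntegrand2 s t₁ t₂ p
            ∂(mulHaarR.prod (mulHaarR.prod mulHaarR)) =
        zetaR (s + 2 * t₁) * zetaR (s + 2 * t₂) * zetaC (s + t₁ + t₂) := by
  have hπ : 0 < Real.pi := Real.pi_pos
  have h2π : (0:ℝ) < 2 * Real.pi := by positivity
  have h2w₃ : 0 < ((2:ℂ) * (s + t₁ + t₂)).re := by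
    have : ((2:ℂ) * (s + t₁ + t₂)).re = 2 * (s + t₁ + t₂).re := by
      simp [Complex.mul_re]
    rw [this]; linarith
  obtain ⟨ig₁, vg₁⟩ := gauss_main h₁ h2π
  obtain ⟨ig₂, vg₂⟩ := gauss_main h2w₃ hπ
  obtain ⟨ig₃, vg₃⟩ := gauss_main h₂ h2π
  set g₁ : ℝ → ℂ := fun x => cpowR x (s + 2 * t₁) * (Real.exp (-(2 * Real.pi * x ^ 2)) : ℂ)
  set g₂ : ℝ → ℂ := fun y =>
    cpowR y (2 * (s + t₁ + t₂)) * (Real.exp (-(Real.pi * y ^ 2)) : ℂ)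
  set g₃ : ℝ → ℂ := fun z => cpowR z (s + 2 * t₂) * (Real.exp (-(2 * Real.pi * z ^ 2)) : ℂ)
  set μ3 := mulHaarR.prod (mulHaarR.prod mulHaarR) with hμ3
  set ψ : ℝ × ℝ × ℝ → ℝ × ℝ × ℝ :=
    fun p => (p.1 * (p.2.2 * p.2.1), p.2.1, p.2.2 * p.2.1) with hψdef
  have ψpres : MeasurePreserving ψ μ3 μ3 := psi_pres
  have hψmeas : Measurable ψ := ψpres.measurable
  have hFmeas : Measurable (flickerIntegrand2 s t₁ t₂) := by
    unfold flickerIntegrand2 cpowR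
    have hlog : ∀ (f : ℝ × ℝ × ℝ → ℝ), Measurable f →
        Measurable fun p : ℝ × ℝ × ℝ => Complex.exp ((s + 2 * t₁) * (Real.log |f p| : ℂ)) :=
      fun f hf => Complex.measurable_exp.comp
        (measurable_const.mul (Complex.measurable_ofReal.comp
          (Real.measurable_log.comp hf.abs)))
    refine (((hlog _ measurable_fst).mul ?_).mul ?_).mul
      (Complex.measurable_ofReal.comp (Real.measurable_exp.comp ?_))
    · exact Complex.measurable_exp.comp
        (measurable_const.mul (Complex.measurable_ofReal.comp
          (Real.measurable_log.comp (measurable_fst.comp measurable_snd).abs)))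
    · exact Complex.measurable_exp.comp
        (measurable_const.mul (Complex.measurable_ofReal.comp
          (Real.measurable_log.comp (measurable_snd.comp measurable_snd).abs)))
    · fun_prop
  have hFaesm : AEStronglyMeasurable (flickerIntegrand2 s t₁ t₂) μ3 :=
    hFmeas.aestronglyMeasurable
  set G : ℝ × ℝ × ℝ → ℂ := fun p => g₁ p.1 * (g₂ p.2.1 * g₃ p.2.2) with hGdef
  have hae1 : ∀ᵐ p : ℝ × ℝ × ℝ ∂μ3, p.1 ≠ 0 := by
    rw [ae_iff]
    have h : {p : ℝ × ℝ × ℝ | ¬ p.1 ≠ 0} = ({0} : Set ℝ) ×ˢ (univ : Set (ℝ × ℝ)) := by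
      ext ⟨a, b, c⟩; simp [eq_comm]
    rw [hμ3, h, Measure.prod_prod, mulHaarR_zero, zero_mul]
  have hae2 : ∀ᵐ p : ℝ × ℝ × ℝ ∂μ3, p.2.1 ≠ 0 := by
    rw [ae_iff]
    have h : {p : ℝ × ℝ × ℝ | ¬ p.2.1 ≠ 0} =
        (univ : Set ℝ) ×ˢ (({0} : Set ℝ) ×ˢ (univ : Set ℝ)) := by
      ext ⟨a, b, c⟩; simp [eq_comm]
    rw [hμ3, h, Measure.prod_prod, Measure.prod_prod, mulHaarR_zero, zero_mul, mul_zero]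
  have hae3 : ∀ᵐ p : ℝ × ℝ × ℝ ∂μ3, p.2.2 ≠ 0 := by
    rw [ae_iff]
    have h : {p : ℝ × ℝ × ℝ | ¬ p.2.2 ≠ 0} =
        (univ : Set ℝ) ×ˢ ((univ : Set ℝ) ×ˢ ({0} : Set ℝ)) := by
      ext ⟨a, b, c⟩; simp [eq_comm]
    rw [hμ3, h, Measure.prod_prod, Measure.prod_prod, mulHaarR_zero, mul_zero, mul_zero]
  have haeG : (fun p => flickerIntegrand2 s t₁ t₂ (ψ p)) =ᵐ[μ3] G := by
    filter_upwards [hae1, hae2, hae3] with p hp1 hp2 hp3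
    exact flicker_point s t₁ t₂ hp1 hp2 hp3
  have hG : Integrable G μ3 := ig₁.mul_prod (ig₂.mul_prod ig₃)
  have hmap : Measure.map ψ μ3 = μ3 := ψpres.map_eq
  have hiff : Integrable (flickerIntegrand2 s t₁ t₂) μ3 ↔
      Integrable ((flickerIntegrand2 s t₁ t₂) ∘ ψ) μ3 := by
    have h := integrable_map_measure (g := flickerIntegrand2 s t₁ t₂) (f := ψ) (μ := μ3)
      (by rw [hmap]; exact hFaesm) hψmeas.aemeasurable
    rw [hmap] at h; exact h
  have hIntF : Integrable (flickerIntegrand2 s t₁ t₂) μ3 :=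
    hiff.mpr (hG.congr haeG.symm)
  refine ⟨hIntF, ?_⟩
  have hIval : ∫ p : ℝ × ℝ × ℝ, flickerIntegrand2 s t₁ t₂ p ∂μ3 =
      (∫ x, g₁ x ∂mulHaarR) * ((∫ y, g₂ y ∂mulHaarR) * (∫ z, g₃ z ∂mulHaarR)) := by
    conv_lhs => rw [← hmap]
    rw [integral_map hψmeas.aemeasurable (by rw [hmap]; exact hFaesm),
      integral_congr_ae haeG]
    have h1 : ∫ p : ℝ × ℝ × ℝ, G p ∂μ3 =
        (∫ x, g₁ x ∂mulHaarR) * ∫ q : ℝ × ℝ, g₂ q.1 * g₃ q.2 ∂(mulHaarR.prod mulHaarR) :=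
      integral_prod_mul g₁ (fun q : ℝ × ℝ => g₂ q.1 * g₃ q.2)
    rw [h1, integral_prod_mul g₂ g₃]
  rw [hIval, vg₁, vg₂, vg₃, zetaR, zetaR, zetaC]
  have hsplit : ∀ a : ℂ, ((2 * Real.pi : ℝ) : ℂ) ^ a =
      ((2:ℝ) : ℂ) ^ a * ((Real.pi : ℝ) : ℂ) ^ a := by
    intro a
    rw [show ((2 * Real.pi : ℝ) : ℂ) = ((2:ℝ) : ℂ) * ((Real.pi : ℝ) : ℂ) by push_cast; ring,
      mul_cpow_ofReal_nonneg (by norm_num) hπ.le]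
  have hsplit' : ((2:ℂ) * (Real.pi : ℂ)) ^ (-(s + t₁ + t₂)) =
      ((2:ℝ) : ℂ) ^ (-(s + t₁ + t₂)) * ((Real.pi : ℝ) : ℂ) ^ (-(s + t₁ + t₂)) := by
    rw [show ((2:ℂ) * (Real.pi : ℂ)) = ((2:ℝ) : ℂ) * ((Real.pi : ℝ) : ℂ) by push_cast; ring,
      mul_cpow_ofReal_nonneg (by norm_num) hπ.le]
  have h2pow : ((2:ℝ) : ℂ) ^ (-((s + 2 * t₁) / 2)) * ((2:ℝ) : ℂ) ^ (-((s + 2 * t₂) / 2)) =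
      ((2:ℝ) : ℂ) ^ (-(s + t₁ + t₂)) := by
    rw [← Complex.cpow_add _ _ (by norm_num : ((2:ℝ) : ℂ) ≠ 0)]
    congr 1; ring
  rw [show (2:ℂ) * (s + t₁ + t₂) / 2 = s + t₁ + t₂ by ring,
    hsplit (-((s + 2 * t₁) / 2)), hsplit (-((s + 2 * t₂) / 2)), hsplit',
    neg_div, neg_div, ← h2pow]
  ring
end

section
/- Let t, u, s₁, s₂ ∈ ℂ with Re(s₁ + u) > 0 and Re(s₂ + t + u) > 0. Then the double integral ∫_{ℂˣ}∫_{ℂˣ} |g₁|_ℂ^{s₂−s₁+t} · |g₂|_ℂ^{s₁+u} · exp(−2π(|g₁|² + |g₂|²/|g₁|²)) d×g₂ d×g₁ converges absolutely and equals ζ_ℂ(s₂ + t + u) · ζ_ℂ(s₁ + u). (This is the case n = 1, F = ℂ of the paper's theorem on the modified GL_n × GL_n Rankin–Selberg integral of Sakellaridis for π = |·|_ℂ^t and σ = |·|_ℂ^u with Gaussian test data, evaluating to L(s₂, π × σ)·L(s₁, σ).) -/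
open MeasureTheory

/-- The integrand of the `n = 1`, `F = ℂ` modified Rankin–Selberg integral of
Sakellaridis, in the variables `p = (g₁, g₂)`:
`|g₁|_ℂ^{s₂-s₁+t} |g₂|_ℂ^{s₁+u} exp(-2π(|g₁|² + |g₂|²/|g₁|²))`. -/
noncomputable def sakIntegrandC1 (s₁ s₂ t u : ℂ) (p : ℂ × ℂ) : ℂ :=
  cpowC p.1 (s₂ - s₁ + t) * cpowC p.2 (s₁ + u) *
    (Real.exp (-(2 * Real.pi) * (‖p.1‖ ^ 2
      + ‖p.2‖ ^ 2 / ‖p.1‖ ^ 2)) : ℂ)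

open Set
open scoped Real ENNReal NNReal

namespace SakAux

lemma measurable_densC : Measurable fun z : ℂ => (2 / (Real.pi * ‖z‖ ^ 2)).toNNReal :=
  (measurable_const.div
    ((continuous_norm.measurable.pow_const 2).const_mul _)).real_toNNReal

lemma mulHaarC_eq : mulHaarC = volume.withDensity
    fun z => ((2 / (Real.pi * ‖z‖ ^ 2)).toNNReal : ℝ≥0∞) := rfl

instance : SFinite mulHaarC := by
  unfold mulHaarC; infer_instance

lemma mulHaarC_singleton_zero : mulHaarC ({0} : Set ℂ) = 0 := by
  rw [mulHaarC, withDensity_apply _ (measurableSet_singleton 0)]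
  rw [Measure.restrict_singleton]
  simp

/-- Radial integrability on `ℂ`. -/
lemma radial_integrable {f : ℝ → ℂ} (hf : IntegrableOn (fun r : ℝ => (r : ℂ) * f r) (Ioi 0)) :
    Integrable (fun z : ℂ => f (‖z‖)) := by
  rw [← MeasurePreserving.integrable_comp_emb
      (Complex.volume_preserving_equiv_real_prod.symm)
      Complex.measurableEquivRealProd.symm.measurableEmbedding]
  set g : ℝ × ℝ → ℂ := (fun z : ℂ => f (‖z‖)) ∘ Complex.measurableEquivRealProd.symm
    with hg
  have hsrc : IntegrableOn g polarCoord.source ↔ Integrable g volume := by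
    rw [IntegrableOn, Measure.restrict_congr_set polarCoord_source_ae_eq_univ,
      Measure.restrict_univ]
  rw [← hsrc, ← polarCoord.symm_image_target_eq_source]
  rw [integrableOn_image_iff_integrableOn_abs_det_fderiv_smul volume
    polarCoord.open_target.measurableSet
    (fun p _ => (hasFDerivAt_polarCoord_symm p).hasFDerivWithinAt)
    polarCoord.symm.injOn g]
  have hprod : IntegrableOn
      (fun p : ℝ × ℝ => ((fun r : ℝ => (r : ℂ) * f r) p.1) * ((fun _ : ℝ => (1 : ℂ)) p.2))
      (Ioi (0:ℝ) ×ˢ Ioo (-π) π) volume := by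
    rw [IntegrableOn, Measure.volume_eq_prod, ← Measure.prod_restrict]
    exact Integrable.mul_prod hf (integrableOn_const measure_Ioo_lt_top.ne)
  rw [show polarCoord.target = Ioi (0:ℝ) ×ˢ Ioo (-π) π from rfl]
  refine hprod.congr ?_
  filter_upwards [ae_restrict_mem (measurableSet_Ioi.prod measurableSet_Ioo)] with p hp
  have hdet : (LinearMap.toContinuousLinearMap (Matrix.toLin (Module.Basis.finTwoProd ℝ)
      (Module.Basis.finTwoProd ℝ)
      !![Real.cos p.2, -p.1 * Real.sin p.2; Real.sin p.2, p.1 * Real.cos p.2])).det = p.1 := by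
    conv_rhs => rw [← one_mul p.1, ← Real.cos_sq_add_sin_sq p.2]
    simp only [neg_mul, LinearMap.det_toContinuousLinearMap, LinearMap.det_toLin,
      Matrix.det_fin_two_of, sub_neg_eq_add]
    ring
  have hgp : g (polarCoord.symm p) = f (‖Complex.polarCoord.symm p‖) := rfl
  rw [mul_one, show (fderivPolarCoordSymm p).det = p.1 from hdet, hgp, Complex.norm_polarCoord_symm, abs_of_pos hp.1,
    Complex.real_smul]

/-- Radial integral on `ℂ`. -/
lemma radial_integral (f : ℝ → ℂ) :
    ∫ z : ℂ, f (‖z‖) =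
      (2 * π : ℝ) • ∫ r in Ioi (0:ℝ), (r : ℂ) * f r := by
  rw [← Complex.integral_comp_polarCoord_symm (fun z => f (‖z‖))]
  have h1 : ∫ p in polarCoord.target, p.1 • f (‖Complex.polarCoord.symm p‖) =
      ∫ p in Ioi (0:ℝ) ×ˢ Ioo (-π) π,
        ((fun r : ℝ => (r : ℂ) * f r) p.1) * ((fun _ : ℝ => (1 : ℂ)) p.2) := by
    rw [show polarCoord.target = Ioi (0:ℝ) ×ˢ Ioo (-π) π from rfl]
    refine setIntegral_congr_fun (measurableSet_Ioi.prod measurableSet_Ioo) fun p hp => ?_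
    rw [Complex.norm_polarCoord_symm, abs_of_pos hp.1, Complex.real_smul, mul_one]
  have h2 := setIntegral_prod_mul (μ := volume) (ν := volume) (fun r : ℝ => (r : ℂ) * f r)
    (fun _ : ℝ => (1 : ℂ)) (Ioi 0) (Ioo (-π) π)
  rw [h1, Measure.volume_eq_prod, h2]
  rw [integral_const, measureReal_def, Measure.restrict_apply_univ, Real.volume_Ioo]
  rw [ENNReal.toReal_ofReal (by linarith [Real.pi_pos])]
  rw [Complex.real_smul, Complex.real_smul]
  push_cast
  ring

/-- The basic one-variable computation. -/
lemma one_var {w : ℂ} (hw : 0 < w.re) {a : ℝ} (ha : 0 < a) :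
    Integrable (fun z : ℂ => cpowC z w * (Real.exp (-a * ‖z‖ ^ 2) : ℂ)) mulHaarC ∧
    ∫ z : ℂ, cpowC z w * (Real.exp (-a * ‖z‖ ^ 2) : ℂ) ∂mulHaarC
      = 2 * (1 / (a : ℂ)) ^ w * Complex.Gamma w := by
  set f : ℝ → ℂ := fun r =>
    (2 / (Real.pi * r ^ 2)) • (Complex.exp (w * (Real.log (r ^ 2) : ℂ)) *
      (Real.exp (-a * r ^ 2) : ℂ)) with hf
  have key : (fun z : ℂ => ((2 / (Real.pi * ‖z‖ ^ 2)).toNNReal : ℝ) •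
      (cpowC z w * (Real.exp (-a * ‖z‖ ^ 2) : ℂ))) = fun z => f (‖z‖) := by
    funext z
    rw [Real.coe_toNNReal _ (by positivity)]
    rfl
  -- the `Ioi` integrand after substitution
  set F₀ : ℝ → ℂ := fun x => (x : ℂ) ^ (w - 1) * Complex.exp (-((a : ℂ) * (x : ℂ))) with hF₀
  have hF₀int : IntegrableOn F₀ (Ioi (0:ℝ)) := by
    have h1 := Complex.GammaIntegral_convergent hw
    have h2 : IntegrableOn
        (fun x : ℝ => ((Real.exp (-(a * x)) : ℝ) : ℂ) * ((a * x : ℝ) : ℂ) ^ (w - 1))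
        (Ioi (0:ℝ)) := by
      have := (integrableOn_Ioi_comp_mul_left_iff
        (fun x : ℝ => ((Real.exp (-x) : ℝ) : ℂ) * ((x : ℝ) : ℂ) ^ (w - 1)) 0 ha).mpr
      rw [mul_zero] at this
      exact this h1
    have hane : ((a : ℂ)) ^ (w - 1) ≠ 0 := by
      simp [Complex.cpow_eq_zero_iff, Complex.ofReal_ne_zero, ha.ne']
    refine (h2.const_mul (((a : ℂ)) ^ (w - 1))⁻¹).congr ?_
    filter_upwards [ae_restrict_mem measurableSet_Ioi] with x hx
    rw [Complex.ofReal_mul, Complex.mul_cpow_ofReal_nonneg ha.le (le_of_lt hx)]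
    rw [Complex.ofReal_exp]
    push_cast
    field_simp
    ring
  have hF₀val : ∫ x in Ioi (0:ℝ), F₀ x = (1 / (a : ℂ)) ^ w * Complex.Gamma w :=
    Complex.integral_cpow_mul_exp_neg_mul_Ioi hw ha
  -- relate `r * f r` to the substituted integrand
  have hrel : ∀ r ∈ Ioi (0:ℝ), (r : ℂ) * f r =
      (Real.pi)⁻¹ • ((|(2:ℝ)| * r ^ ((2:ℝ) - 1)) • F₀ (r ^ (2:ℝ))) := by
    intro r hr
    have hr0 : (0:ℝ) < r := hr
    have hr2 : (0:ℝ) < r ^ 2 := by positivity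
    have hrp : r ^ (2:ℝ) = r ^ 2 := by
      rw [show (2:ℝ) = ((2:ℕ):ℝ) by norm_num, Real.rpow_natCast]
    have hcp : ((r ^ 2 : ℝ) : ℂ) ^ (w - 1) =
        Complex.exp (w * (Real.log (r ^ 2) : ℂ)) / ((r ^ 2 : ℝ) : ℂ) := by
      rw [Complex.cpow_def_of_ne_zero (by exact_mod_cast hr2.ne'), ← Complex.ofReal_log hr2.le,
        mul_comm, sub_mul, one_mul, Complex.exp_sub, ← Complex.ofReal_exp, Real.exp_log hr2]
    rw [hrp, hf]
    simp only [Complex.real_smul, hF₀]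
    rw [hcp]
    have : Complex.exp (-((a:ℂ) * ((r^2:ℝ):ℂ))) = ((Real.exp (-a * r ^ 2) : ℝ) : ℂ) := by
      rw [Complex.ofReal_exp]; push_cast; ring_nf
    rw [this]
    have hpi : (Real.pi : ℂ) ≠ 0 := by exact_mod_cast Real.pi_ne_zero
    have hrne : ((r:ℝ):ℂ) ≠ 0 := by exact_mod_cast hr0.ne'
    rw [show (2:ℝ) - 1 = 1 by norm_num, Real.rpow_one, abs_two]
    push_cast
    field_simp
  have hint : IntegrableOn (fun r : ℝ => (r : ℂ) * f r) (Ioi (0:ℝ)) := by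
    have h2 : IntegrableOn (fun r : ℝ => (|(2:ℝ)| * r ^ ((2:ℝ) - 1)) • F₀ (r ^ (2:ℝ)))
        (Ioi (0:ℝ)) := (integrableOn_Ioi_comp_rpow_iff F₀ two_ne_zero).mpr hF₀int
    refine ((h2.smul ((Real.pi)⁻¹ : ℝ)).congr ?_ : _)
    filter_upwards [ae_restrict_mem measurableSet_Ioi] with r hr
    rw [Pi.smul_apply, ← hrel r hr]
  have hval : ∫ r in Ioi (0:ℝ), (r : ℂ) * f r =
      (Real.pi)⁻¹ • ((1 / (a : ℂ)) ^ w * Complex.Gamma w) := by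
    rw [setIntegral_congr_fun measurableSet_Ioi hrel, integral_smul, integral_comp_rpow_Ioi F₀
      two_ne_zero, hF₀val]
  constructor
  · rw [mulHaarC_eq]
    refine (integrable_withDensity_iff_integrable_smul₀ (E := ℂ) measurable_densC.aemeasurable
      (g := fun z : ℂ => cpowC z w * (Real.exp (-a * ‖z‖ ^ 2) : ℂ))).mpr ?_
    have h3 := radial_integrable hint
    rwa [← key] at h3
  · rw [mulHaarC_eq, integral_withDensity_eq_integral_smul₀ measurable_densC.aemeasurable]
    have : (fun z : ℂ => (2 / (Real.pi * ‖z‖ ^ 2)).toNNReal •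
        (cpowC z w * (Real.exp (-a * ‖z‖ ^ 2) : ℂ))) =
        fun z : ℂ => f (‖z‖) := by
      rw [← key]; funext z; rw [NNReal.smul_def]
    rw [this, radial_integral f, hval]
    rw [Complex.real_smul, Complex.real_smul]
    push_cast
    have hpi : (Real.pi : ℂ) ≠ 0 := by exact_mod_cast Real.pi_ne_zero
    field_simp

lemma measurable_densC' : Measurable fun z : ℂ => ENNReal.ofReal (2 / (Real.pi * ‖z‖ ^ 2)) :=
  ENNReal.measurable_ofReal.comp
    (measurable_const.div ((continuous_norm.measurable.pow_const 2).const_mul _))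

lemma mulHaarC_map_mul {c : ℂ} (hc : c ≠ 0) :
    Measure.map (fun y : ℂ => c * y) mulHaarC = mulHaarC := by
  have hm : Measurable fun z : ℂ => c * z := measurable_id.const_mul c
  have hns : (0:ℝ) < Complex.normSq c := Complex.normSq_pos.mpr hc
  have hdet : LinearMap.det (LinearMap.mul ℝ ℂ c) = Complex.normSq c := by
    rw [← Algebra.norm_complex_apply]; rfl
  have hmap : Measure.map (fun z : ℂ => c * z) volume
      = ENNReal.ofReal (Complex.normSq c)⁻¹ • volume := by
    have h := Measure.map_linearMap_addHaar_eq_smul_addHaar (μ := volume)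
      (f := LinearMap.mul ℝ ℂ c) (by rw [hdet]; exact hns.ne')
    rw [hdet, abs_of_nonneg (inv_nonneg.mpr hns.le)] at h
    rw [show (fun z : ℂ => c * z) = ⇑(LinearMap.mul ℝ ℂ c) from
      funext fun z => (LinearMap.mul_apply' c z).symm]
    exact h
  set d : ℂ → ℝ≥0∞ := fun z => ENNReal.ofReal (2 / (Real.pi * ‖z‖ ^ 2)) with hd
  have hdmeas : Measurable d := measurable_densC'
  have hdd : ∀ z : ℂ, d z = ENNReal.ofReal (Complex.normSq c) * d (c * z) := by
    intro z
    rcases eq_or_ne z 0 with rfl | hz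
    · simp [hd]
    · rw [hd, ← ENNReal.ofReal_mul hns.le]
      have h1 : ‖c * z‖ ^ 2 = Complex.normSq c * ‖z‖ ^ 2 := by
        rw [norm_mul, mul_pow, Complex.sq_norm]
      rw [h1]
      have h2 : ‖z‖ ^ 2 ≠ 0 := pow_ne_zero _ (norm_ne_zero_iff.mpr hz)
      field_simp
  ext s hs
  rw [Measure.map_apply hm hs, mulHaarC, withDensity_apply _ (hm hs), withDensity_apply _ hs]
  calc ∫⁻ z in (fun z : ℂ => c * z) ⁻¹' s, d z ∂volume
      = ∫⁻ z in (fun z : ℂ => c * z) ⁻¹' s,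
          (fun w => ENNReal.ofReal (Complex.normSq c) * d w) (c * z) ∂volume :=
        lintegral_congr fun z => hdd z
    _ = ∫⁻ w in s, ENNReal.ofReal (Complex.normSq c) * d w
          ∂(Measure.map (fun z : ℂ => c * z) volume) :=
        (setLIntegral_map hs (hdmeas.const_mul _) hm).symm
    _ = ∫⁻ w in s, d w ∂volume := by
        rw [hmap, Measure.restrict_smul, lintegral_smul_measure,
          lintegral_const_mul _ hdmeas, smul_eq_mul, ← mul_assoc, ← ENNReal.ofReal_mul (inv_nonneg.mpr hns.le),
          inv_mul_cancel₀ hns.ne', ENNReal.ofReal_one, one_mul]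

/-- The shear `(x, y) ↦ (x, x y)` (fixed where `x = 0`) as a measurable equivalence. -/
noncomputable def mulShear : (ℂ × ℂ) ≃ᵐ (ℂ × ℂ) where
  toFun p := (p.1, if p.1 = 0 then p.2 else p.1 * p.2)
  invFun p := (p.1, if p.1 = 0 then p.2 else p.1⁻¹ * p.2)
  left_inv p := by
    rcases eq_or_ne p.1 0 with h | h <;>
      simp [h, inv_mul_cancel_left₀, Prod.ext_iff]
  right_inv p := by
    rcases eq_or_ne p.1 0 with h | h <;>
      simp [h, mul_inv_cancel_left₀, Prod.ext_iff]
  measurable_toFun := by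
    refine measurable_fst.prodMk
      (Measurable.ite ?_ measurable_snd (measurable_fst.mul measurable_snd))
    exact measurable_fst (measurableSet_singleton 0)
  measurable_invFun := by
    refine measurable_fst.prodMk
      (Measurable.ite ?_ measurable_snd (measurable_fst.inv.mul measurable_snd))
    exact measurable_fst (measurableSet_singleton 0)

@[simp] lemma mulShear_apply (p : ℂ × ℂ) :
    mulShear p = (p.1, if p.1 = 0 then p.2 else p.1 * p.2) := rfl

lemma mulShear_measurePreserving :
    MeasurePreserving (⇑mulShear) (mulHaarC.prod mulHaarC) (mulHaarC.prod mulHaarC) := by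
  have h0 : MeasurePreserving (fun p : ℂ × ℂ => (p.1, p.1 * p.2)) (mulHaarC.prod mulHaarC)
      (mulHaarC.prod mulHaarC) := by
    refine (MeasurePreserving.id mulHaarC).skew_product (g := fun x y => x * y)
      (measurable_fst.mul measurable_snd) ?_
    rw [ae_iff]
    refine measure_mono_null (fun x hx => ?_) mulHaarC_singleton_zero
    simp only [Set.mem_setOf_eq] at hx
    simp only [Set.mem_singleton_iff]
    by_contra hne
    exact hx (mulHaarC_map_mul hne)
  have hnull : (mulHaarC.prod mulHaarC) {p : ℂ × ℂ | p.1 = 0} = 0 := by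
    have e1 : {p : ℂ × ℂ | p.1 = 0} = ({0} : Set ℂ) ×ˢ (Set.univ : Set ℂ) := by
      ext ⟨x, y⟩; simp [Set.mem_prod, eq_comm]
    rw [e1, Measure.prod_prod, mulHaarC_singleton_zero, zero_mul]
  have hae : (fun p : ℂ × ℂ => (p.1, p.1 * p.2)) =ᵐ[mulHaarC.prod mulHaarC] ⇑mulShear := by
    rw [Filter.EventuallyEq, ae_iff]
    refine measure_mono_null (fun p hp => ?_) hnull
    simp only [Set.mem_setOf_eq] at hp ⊢
    by_contra hne
    exact hp (by simp [mulShear_apply, if_neg hne])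
  exact ⟨mulShear.measurable, by rw [← Measure.map_congr hae, h0.map_eq]⟩

end SakAux

/-- For `Re(s₁ + u) > 0` and `Re(s₂ + t + u) > 0`, the double integral
`∫∫ |g₁|_ℂ^{s₂-s₁+t} |g₂|_ℂ^{s₁+u} e^{-2π(|g₁|² + |g₂|²/|g₁|²)} d×g₂ d×g₁` converges
absolutely and equals `ζ_ℂ(s₂+t+u) ζ_ℂ(s₁+u)`. -/
theorem stmt_11 (t u s₁ s₂ : ℂ) (h₁ : 0 < (s₁ + u).re) (h₂ : 0 < (s₂ + t + u).re) :
    Integrable (sakIntegrandC1 s₁ s₂ t u) (mulHaarC.prod mulHaarC) ∧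
      ∫ p : ℂ × ℂ, sakIntegrandC1 s₁ s₂ t u p ∂(mulHaarC.prod mulHaarC) =
        zetaC (s₂ + t + u) * zetaC (s₁ + u) := by
  have h2π : (0:ℝ) < 2 * Real.pi := by positivity
  obtain ⟨hAint, hAval⟩ := SakAux.one_var h₂ h2π
  obtain ⟨hBint, hBval⟩ := SakAux.one_var h₁ h2π
  have hprodint : Integrable (fun p : ℂ × ℂ =>
      (cpowC p.1 (s₂ + t + u) * (Real.exp (-(2 * Real.pi) * ‖p.1‖ ^ 2) : ℂ)) *
      (cpowC p.2 (s₁ + u) * (Real.exp (-(2 * Real.pi) * ‖p.2‖ ^ 2) : ℂ)))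
      (mulHaarC.prod mulHaarC) := hAint.mul_prod hBint
  have hT := SakAux.mulShear_measurePreserving
  have hnull : (mulHaarC.prod mulHaarC) {p : ℂ × ℂ | p.1 = 0 ∨ p.2 = 0} = 0 := by
    rw [Set.setOf_or]
    refine measure_union_null ?_ ?_
    · have e1 : {p : ℂ × ℂ | p.1 = 0} = ({0} : Set ℂ) ×ˢ (Set.univ : Set ℂ) := by
        ext ⟨x, y⟩; simp [Set.mem_prod, eq_comm]
      rw [e1, Measure.prod_prod, SakAux.mulHaarC_singleton_zero, zero_mul]
    · have e2 : {p : ℂ × ℂ | p.2 = 0} = (Set.univ : Set ℂ) ×ˢ ({0} : Set ℂ) := by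
        ext ⟨x, y⟩; simp [Set.mem_prod, eq_comm]
      rw [e2, Measure.prod_prod, SakAux.mulHaarC_singleton_zero, mul_zero]
  have hexp : ∀ (X Y : ℂ), Complex.exp ((s₂ - s₁ + t) * X) * Complex.exp ((s₁ + u) * (X + Y))
      = Complex.exp ((s₂ + t + u) * X) * Complex.exp ((s₁ + u) * Y) := by
    intro X Y
    rw [← Complex.exp_add, ← Complex.exp_add]
    congr 1
    ring
  have hae : (sakIntegrandC1 s₁ s₂ t u) ∘ ⇑SakAux.mulShear =ᵐ[mulHaarC.prod mulHaarC]
      (fun p : ℂ × ℂ =>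
      (cpowC p.1 (s₂ + t + u) * (Real.exp (-(2 * Real.pi) * ‖p.1‖ ^ 2) : ℂ)) *
      (cpowC p.2 (s₁ + u) * (Real.exp (-(2 * Real.pi) * ‖p.2‖ ^ 2) : ℂ))) := by
    rw [Filter.EventuallyEq, ae_iff]
    refine measure_mono_null (fun p hp => ?_) hnull
    simp only [Set.mem_setOf_eq] at hp ⊢
    by_contra hne
    push_neg at hne
    obtain ⟨hp1, hp2⟩ := hne
    apply hp
    have hx2 : ‖p.1‖ ^ 2 ≠ 0 := pow_ne_zero _ (norm_ne_zero_iff.mpr hp1)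
    have hy2 : ‖p.2‖ ^ 2 ≠ 0 := pow_ne_zero _ (norm_ne_zero_iff.mpr hp2)
    show sakIntegrandC1 s₁ s₂ t u (SakAux.mulShear p) = _
    rw [show SakAux.mulShear p = (p.1, p.1 * p.2) by
      rw [SakAux.mulShear_apply, if_neg hp1]]
    unfold sakIntegrandC1 cpowC
    simp only
    have habs : ‖p.1 * p.2‖ ^ 2 = ‖p.1‖ ^ 2 * ‖p.2‖ ^ 2 := by
      rw [norm_mul, mul_pow]
    rw [habs, Real.log_mul hx2 hy2,
      show ‖p.1‖ ^ 2 * ‖p.2‖ ^ 2 / ‖p.1‖ ^ 2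
        = ‖p.2‖ ^ 2 by field_simp,
      mul_add (-(2 * Real.pi)), Real.exp_add, Complex.ofReal_mul]
    push_cast
    rw [hexp]
    ring
  constructor
  · exact (hT.integrable_comp_emb SakAux.mulShear.measurableEmbedding).mp
      (hprodint.congr hae.symm)
  · have hcomp := hT.integral_comp SakAux.mulShear.measurableEmbedding
      (sakIntegrandC1 s₁ s₂ t u)
    have hEq := (integral_congr_ae hae).symm.trans hcomp
    have h7 : ∫ p : ℂ × ℂ, sakIntegrandC1 s₁ s₂ t u p ∂(mulHaarC.prod mulHaarC)
        = (∫ z : ℂ, cpowC z (s₂ + t + u) *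
            (Real.exp (-(2 * Real.pi) * ‖z‖ ^ 2) : ℂ) ∂mulHaarC) *
          ∫ z : ℂ, cpowC z (s₁ + u) *
            (Real.exp (-(2 * Real.pi) * ‖z‖ ^ 2) : ℂ) ∂mulHaarC :=
      hEq.symm.trans (MeasureTheory.integral_prod_mul
        (μ := mulHaarC) (ν := mulHaarC)
        (fun z : ℂ => cpowC z (s₂ + t + u) *
          (Real.exp (-(2 * Real.pi) * ‖z‖ ^ 2) : ℂ))
        (fun z : ℂ => cpowC z (s₁ + u) *
          (Real.exp (-(2 * Real.pi) * ‖z‖ ^ 2) : ℂ)))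
    rw [h7, hAval, hBval]
    have hz : ∀ w : ℂ, 2 * (1 / ((2 * Real.pi : ℝ) : ℂ)) ^ w * Complex.Gamma w = zetaC w := by
      intro w
      rw [zetaC]
      have hx : ((2 * Real.pi : ℝ) : ℂ) = 2 * (Real.pi : ℂ) := by push_cast; ring
      rw [one_div, Complex.inv_cpow _ _ (by
          rw [Complex.arg_ofReal_of_nonneg h2π.le]; exact Real.pi_ne_zero.symm),
        ← Complex.cpow_neg, hx]
    rw [hz, hz]
end

section
/- Let t₁, t₂, u, s₁, s₂ ∈ ℂ with Re(s₁ + u) > 0, Re(s₂ + t₁ + u + 1/2) > 0, and Re(s₂ + t₂ + u + 1/2) > 0. Then the triple integral ∫_{ℂˣ}∫_{ℂˣ}∫_{ℂˣ} |g₁|_ℂ^{s₂−s₁+t₁+1/2} · |g₂|_ℂ^{s₁+u} · |c|_ℂ^{t₂−t₁} · exp(−2π(|c|² + |g₁|²/|c|² + |g₂|²/|g₁|²)) d×c d×g₂ d×g₁ converges absolutely and equals ζ_ℂ(s₁ + u) · ζ_ℂ(s₂ + t₁ + u + 1/2) · ζ_ℂ(s₂ + t₂ + u + 1/2). (This is the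 case n = 2, F = ℂ of the paper's theorem on the modified GL_n × GL_{n−1} Rankin–Selberg integral of Sakellaridis, made fully explicit for π = |·|_ℂ^{t₁} ⊞ |·|_ℂ^{t₂} spherical on GL₂(ℂ) and σ = |·|_ℂ^u on GL₁(ℂ) via the paper's propagation formula; the integral evaluates to L(s₂ + 1/2, π × σ)·L(s₁, σ).) -/
open MeasureTheory

/-- The integrand of the `n = 2`, `F = ℂ` modified `GL_n × GL_{n-1}` Rankin–Selberg
integral of Sakellaridis, in the variables `p = (g₁, g₂, c)`:
`|g₁|_ℂ^{s₂-s₁+t₁+1/2} |g₂|_ℂ^{s₁+u} |c|_ℂ^{t₂-t₁}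
  exp(-2π(|c|² + |g₁|²/|c|² + |g₂|²/|g₁|²))`. -/
noncomputable def sakIntegrandC2 (s₁ s₂ t₁ t₂ u : ℂ) (p : ℂ × ℂ × ℂ) : ℂ :=
  cpowC p.1 (s₂ - s₁ + t₁ + 1 / 2) * cpowC p.2.1 (s₁ + u) * cpowC p.2.2 (t₂ - t₁) *
    (Real.exp (-(2 * Real.pi) * (‖p.2.2‖ ^ 2
      + ‖p.1‖ ^ 2 / ‖p.2.2‖ ^ 2
      + ‖p.2.1‖ ^ 2 / ‖p.1‖ ^ 2)) : ℂ)

open Set Complex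
open scoped ENNReal NNReal

noncomputable abbrev ρC : ℂ → ENNReal := fun z => ENNReal.ofReal (2 / (Real.pi * ‖z‖ ^ 2))

lemma measurable_ρC : Measurable ρC :=
  (measurable_const.div ((measurable_const.mul ((continuous_norm.measurable).pow_const 2)))).ennreal_ofReal

instance : SigmaFinite mulHaarC :=
  SigmaFinite.withDensity_of_ne_top' fun _ => ENNReal.ofReal_ne_top

lemma mulHaarC_null_singleton : mulHaarC {0} = 0 :=
  withDensity_absolutelyContinuous volume ρC (measure_singleton 0)

lemma mulHaarC_ae_ne_zero : ∀ᵐ z ∂mulHaarC, z ≠ 0 := by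
  rw [ae_iff]
  convert mulHaarC_null_singleton using 2
  ext z; simp

lemma map_equiv_withDensity (e : ℂ ≃ᵐ ℂ) (μ : Measure ℂ) {g : ℂ → ENNReal} (hg : Measurable g) :
    Measure.map e (μ.withDensity (g ∘ e)) = (Measure.map e μ).withDensity g := by
  ext s hs
  rw [Measure.map_apply e.measurable hs, withDensity_apply _ hs,
    withDensity_apply _ (e.measurable hs), setLIntegral_map hs hg e.measurable]
  rfl

lemma map_mul_volume {w : ℂ} (hw : w ≠ 0) :
    Measure.map (fun z => w * z) volume =
      ENNReal.ofReal (Complex.normSq w)⁻¹ • volume := by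
  have hdet : LinearMap.det (Algebra.lmul ℝ ℂ w) = Complex.normSq w := by
    rw [← Algebra.norm_apply, Algebra.norm_complex_apply]
  have h := Measure.map_linearMap_addHaar_eq_smul_addHaar (volume : Measure ℂ)
      (f := Algebra.lmul ℝ ℂ w) (by rw [hdet]; simpa using hw)
  rw [hdet] at h
  have hco : ⇑(Algebra.lmul ℝ ℂ w) = fun z => w * z := by
    funext z; simp [Algebra.lmul]
  rw [hco] at h
  rw [h, _root_.abs_of_nonneg (inv_nonneg.2 (Complex.normSq_nonneg w))]

lemma measurePreserving_mulC {w : ℂ} (hw : w ≠ 0) :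
    MeasurePreserving (fun z => w * z) mulHaarC mulHaarC := by
  refine ⟨measurable_const_mul w, ?_⟩
  set e : ℂ ≃ᵐ ℂ := (Homeomorph.mulLeft₀ w hw).toMeasurableEquiv with he
  have hce : ⇑e = fun z => w * z := rfl
  set g : ℂ → ENNReal := fun z => ENNReal.ofReal (Complex.normSq w) * ρC z with hg
  have hgm : Measurable g := measurable_const.mul measurable_ρC
  have hcomp : ρC = g ∘ e := by
    funext z
    have habs : ‖(w * z)‖ = ‖w‖ * ‖z‖ := norm_mul _ _
    simp only [hg, Function.comp_apply, hce, ρC, habs]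
    rw [← ENNReal.ofReal_mul (normSq_nonneg w)]
    congr 1
    rcases eq_or_ne z 0 with rfl | hz
    · simp
    · have h1 : ‖w‖ ≠ 0 := norm_ne_zero_iff.mpr hw
      have h2 : ‖z‖ ≠ 0 := norm_ne_zero_iff.mpr hz
      rw [← Complex.sq_norm]
      field_simp
  have hμ : mulHaarC = volume.withDensity ρC := rfl
  calc Measure.map (fun z => w * z) mulHaarC
      = Measure.map e (volume.withDensity (g ∘ e)) := by rw [hμ, hcomp, hce]
    _ = (Measure.map e volume).withDensity g := map_equiv_withDensity e volume hgm
    _ = (ENNReal.ofReal (Complex.normSq w)⁻¹ • volume).withDensity g := by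
        rw [hce, map_mul_volume hw]
    _ = ENNReal.ofReal (Complex.normSq w)⁻¹ • (volume.withDensity g) := by
        rw [withDensity_smul_measure]
    _ = ENNReal.ofReal (Complex.normSq w)⁻¹ •
          (ENNReal.ofReal (Complex.normSq w) • volume.withDensity ρC) := by
        rw [← withDensity_smul _ measurable_ρC]; rfl
    _ = mulHaarC := by
        rw [hμ, smul_smul, ← ENNReal.ofReal_mul (inv_nonneg.2 (normSq_nonneg w)),
          inv_mul_cancel₀ (Complex.normSq_pos.2 hw).ne', ENNReal.ofReal_one, one_smul]

theorem integrableOn_comp_polarCoord_symm' {E : Type*} [NormedAddCommGroup E] [NormedSpace ℝ E]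
    (f : ℝ × ℝ → E) :
    IntegrableOn (fun p => p.1 • f (polarCoord.symm p)) polarCoord.target volume ↔
      Integrable f volume := by
  set B : ℝ × ℝ → ℝ × ℝ →L[ℝ] ℝ × ℝ := fun p =>
    LinearMap.toContinuousLinearMap (Matrix.toLin (Module.Basis.finTwoProd ℝ) (Module.Basis.finTwoProd ℝ)
      !![Real.cos p.2, -p.1 * Real.sin p.2; Real.sin p.2, p.1 * Real.cos p.2])
  have A : ∀ p ∈ polarCoord.target, HasFDerivWithinAt polarCoord.symm (B p) polarCoord.target p :=
    fun p _ => (hasFDerivAt_polarCoord_symm p).hasFDerivWithinAt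
  have B_det : ∀ p, (B p).det = p.1 := by
    intro p
    conv_rhs => rw [← one_mul p.1, ← Real.cos_sq_add_sin_sq p.2]
    simp only [B, neg_mul, LinearMap.det_toContinuousLinearMap, LinearMap.det_toLin,
      Matrix.det_fin_two_of, sub_neg_eq_add]
    ring
  have hinj : Set.InjOn polarCoord.symm polarCoord.target := polarCoord.symm.injOn
  have h1 : Integrable f volume ↔ IntegrableOn f polarCoord.source volume := by
    rw [IntegrableOn, Measure.restrict_congr_set polarCoord_source_ae_eq_univ,
      Measure.restrict_univ]
  rw [h1, ← polarCoord.symm_image_target_eq_source,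
    integrableOn_image_iff_integrableOn_abs_det_fderiv_smul volume
      polarCoord.open_target.measurableSet A hinj f]
  exact integrableOn_congr_fun
    (fun p hp => by rw [B_det, abs_of_pos (hp.1 : (0:ℝ) < p.1)])
    polarCoord.open_target.measurableSet |>.symm

theorem Complex.integrableOn_comp_polarCoord_symm' {E : Type*} [NormedAddCommGroup E]
    [NormedSpace ℝ E] (f : ℂ → E) :
    IntegrableOn (fun p : ℝ × ℝ => p.1 • f (Complex.polarCoord.symm p)) polarCoord.target volume ↔
      Integrable f volume := by
  rw [← (Complex.volume_preserving_equiv_real_prod.symm).integrable_comp_emb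
      Complex.measurableEquivRealProd.symm.measurableEmbedding]
  exact _root_.integrableOn_comp_polarCoord_symm' (f ∘ ⇑Complex.measurableEquivRealProd.symm)

noncomputable def gI (w : ℂ) (z : ℂ) : ℂ :=
  cpowC z w * (Real.exp (-(2 * Real.pi) * ‖z‖ ^ 2) : ℂ)

noncomputable abbrev ρN : ℂ → NNReal := fun z => Real.toNNReal (2 / (Real.pi * ‖z‖ ^ 2))

lemma measurable_ρN : Measurable ρN :=
  (measurable_const.div ((measurable_const.mul
    ((continuous_norm.measurable).pow_const 2)))).real_toNNReal

lemma mulHaarC_eq : mulHaarC = volume.withDensity fun z => ((ρN z : ℝ≥0∞)) := rfl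

lemma measurable_gI (w : ℂ) : Measurable (gI w) := by
  unfold gI cpowC
  exact (Complex.measurable_exp.comp (measurable_const.mul
      (Complex.measurable_ofReal.comp (Real.measurable_log.comp
        ((continuous_norm.measurable).pow_const 2))))).mul
    (Complex.measurable_ofReal.comp (Real.measurable_exp.comp
      (measurable_const.mul ((continuous_norm.measurable).pow_const 2))))

open Real in
lemma gI_key {w : ℂ} (hw : 0 < w.re) :
    Integrable (gI w) mulHaarC ∧ ∫ z, gI w z ∂mulHaarC = zetaC w := by
  have hπ : (0:ℝ) < π := Real.pi_pos
  set F : ℂ → ℂ := fun z => (2 / (Real.pi * ‖z‖ ^ 2)) • gI w z with hF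
  have hsmul : (fun z => ((ρN z : ℝ)) • gI w z) = F := by
    funext z
    simp only [hF]
    congr 1
    exact Real.coe_toNNReal _ (by positivity)
  -- radial profile
  set f₁ : ℝ → ℂ := fun r => r • ((2 / (Real.pi * r ^ 2)) •
    (Complex.exp (w * (Real.log (r ^ 2) : ℂ)) * (Real.exp (-(2 * Real.pi) * r ^ 2) : ℂ))) with hf₁
  have hrad : (fun p : ℝ × ℝ => p.1 • F (Complex.polarCoord.symm p)) =
      fun p : ℝ × ℝ => f₁ p.1 * (fun _ : ℝ => (1:ℂ)) p.2 := by
    funext p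
    simp only [hF, hf₁, gI, cpowC, Complex.norm_polarCoord_symm, _root_.sq_abs, mul_one]
  -- integrability of the radial profile
  have hf₁meas : AEStronglyMeasurable f₁ (volume.restrict (Ioi (0:ℝ))) := by
    refine Measurable.aestronglyMeasurable ?_
    exact measurable_id.smul ((measurable_const.div
        (measurable_const.mul (measurable_id.pow_const 2))).smul
      ((Complex.measurable_exp.comp (measurable_const.mul
        (Complex.measurable_ofReal.comp (Real.measurable_log.comp
          (measurable_id.pow_const 2))))).mul
       (Complex.measurable_ofReal.comp (Real.measurable_exp.comp
        (measurable_const.mul (measurable_id.pow_const 2))))))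
  have hnorm : ∀ r : ℝ, 0 < r →
      ‖f₁ r‖ = (2/π) * (r ^ (2*w.re - 1) * Real.exp (-(2*π) * r^2)) := by
    intro r hr0
    have hrne : r ≠ 0 := hr0.ne'
    have hπne : π ≠ 0 := hπ.ne'
    rw [hf₁, norm_smul, norm_smul, norm_mul, Real.norm_eq_abs, Real.norm_eq_abs,
      Complex.norm_exp, Complex.norm_real, Real.norm_eq_abs,
      abs_of_pos hr0, _root_.abs_of_nonneg (by positivity : (0:ℝ) ≤ 2 / (π * r ^ 2)),
      _root_.abs_of_nonneg (Real.exp_pos _).le]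
    have h1 : (w * ((Real.log (r^2) : ℝ) : ℂ)).re = w.re * Real.log (r^2) := by
      simp [Complex.mul_re]
    rw [h1]
    have h2 : Real.exp (w.re * Real.log (r ^ 2)) = r ^ (2 * w.re) := by
      rw [mul_comm, ← Real.rpow_def_of_pos (by positivity)]
      rw [← Real.rpow_natCast r 2, ← Real.rpow_mul hr0.le]
      norm_num
    rw [h2, Real.rpow_sub hr0, Real.rpow_one]
    field_simp
  have hbound : IntegrableOn
      (fun r : ℝ => (2/π) * (r ^ (2*w.re - 1) * Real.exp (-(2*π) * r^2))) (Ioi (0:ℝ)) :=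
    ((integrableOn_rpow_mul_exp_neg_mul_sq (by positivity) (by linarith)).const_mul _)
  have hint₁ : IntegrableOn f₁ (Ioi (0:ℝ)) := by
    refine Integrable.mono' hbound hf₁meas ?_
    filter_upwards [ae_restrict_mem measurableSet_Ioi] with r hr
    rw [hnorm r hr]
  -- value of the radial integral via substitution t = r^2
  set g₀ : ℝ → ℂ := fun t => (Real.pi * t)⁻¹ •
    (Complex.exp (w * (Real.log t : ℂ)) * (Real.exp (-(2 * Real.pi) * t) : ℂ)) with hg₀
  have hsub : ∫ r in Ioi (0:ℝ), f₁ r = ∫ t in Ioi (0:ℝ), g₀ t := by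
    rw [← integral_comp_rpow_Ioi_of_pos (g := g₀) two_pos]
    refine setIntegral_congr_fun measurableSet_Ioi (fun r hr => ?_)
    have hr0 : (0:ℝ) < r := hr
    have h2 : r ^ (2:ℝ) = r ^ 2 := by
      rw [← Real.rpow_natCast r 2]; norm_num
    have h1 : r ^ ((2:ℝ) - 1) = r := by norm_num
    simp only [hf₁, hg₀, h2, h1]
    rw [smul_smul, smul_smul]
    congr 1
    field_simp
  have hg₀val : ∫ t in Ioi (0:ℝ), g₀ t
      = (π:ℂ)⁻¹ * ((1/((2*π:ℝ):ℂ)) ^ w * Complex.Gamma w) := by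
    have h2π : (0:ℝ) < 2*π := by positivity
    have base := integral_cpow_mul_exp_neg_mul_Ioi hw h2π
    have hcongr : ∫ t in Ioi (0:ℝ), g₀ t
        = ∫ t in Ioi (0:ℝ), (π:ℂ)⁻¹ * ((t:ℂ) ^ (w-1) * Complex.exp (-(((2*π:ℝ):ℂ) * (t:ℂ)))) := by
      refine setIntegral_congr_fun measurableSet_Ioi (fun t ht => ?_)
      have ht0 : (0:ℝ) < t := ht
      have htne : (t:ℂ) ≠ 0 := Complex.ofReal_ne_zero.2 ht0.ne'
      have hπne : (π:ℂ) ≠ 0 := Complex.ofReal_ne_zero.2 hπ.ne'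
      have hexp : Complex.exp (w * (Real.log t : ℂ)) = (t:ℂ) ^ w := by
        rw [Complex.cpow_def_of_ne_zero htne, ← Complex.ofReal_log ht0.le, mul_comm]
      have hE : ((Real.exp (-(2 * π) * t) : ℝ) : ℂ)
          = Complex.exp (-(((2*π:ℝ):ℂ) * (t:ℂ))) := by
        rw [Complex.ofReal_exp]
        congr 1
        push_cast
        ring
      simp only [hg₀, hexp, hE, Complex.real_smul]
      rw [Complex.cpow_sub _ _ htne, Complex.cpow_one]
      push_cast
      field_simp
    rw [hcongr, integral_const_mul, base]
  -- the θ integral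
  have hIoo : ∫ _ in Ioo (-π) π, (1:ℂ) = ((2*π:ℝ):ℂ) := by
    rw [setIntegral_const, Real.volume_real_Ioo_of_le (by linarith),
      Complex.real_smul, mul_one]
    push_cast
    ring
  -- integrability over the plane
  have htarget_int : IntegrableOn (fun p : ℝ × ℝ => p.1 • F (Complex.polarCoord.symm p))
      polarCoord.target volume := by
    rw [hrad, IntegrableOn, polarCoord_target, Measure.volume_eq_prod, ← Measure.prod_restrict]
    exact hint₁.mul_prod (integrableOn_const measure_Ioo_lt_top.ne)
  have hFint : Integrable F volume := (Complex.integrableOn_comp_polarCoord_symm' F).mp htarget_int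
  have hFval : ∫ z, F z = (∫ r in Ioi (0:ℝ), f₁ r) * ((2*π:ℝ):ℂ) := by
    rw [← Complex.integral_comp_polarCoord_symm F, hrad, polarCoord_target, Measure.volume_eq_prod,
      ← Measure.prod_restrict, integral_prod_mul f₁ (fun _ : ℝ => (1:ℂ)), hIoo]
  constructor
  · rw [mulHaarC_eq, integrable_withDensity_iff_integrable_coe_smul measurable_ρN, hsmul]
    exact hFint
  · rw [mulHaarC_eq, integral_withDensity_eq_integral_smul measurable_ρN]
    simp_rw [NNReal.smul_def]
    rw [hsmul, hFval, hsub, hg₀val]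
    have hπC : (π:ℂ) ≠ 0 := Complex.ofReal_ne_zero.2 hπ.ne'
    have h2π : (0:ℝ) < 2*π := by positivity
    have harg : ((2*π:ℝ):ℂ).arg ≠ π := by
      rw [Complex.arg_ofReal_of_nonneg h2π.le]
      exact hπ.ne
    have hcp : (1/((2*π:ℝ):ℂ)) ^ w = ((2*π:ℝ):ℂ) ^ (-w) := by
      rw [one_div, Complex.inv_cpow _ _ harg, ← Complex.cpow_neg]
    rw [zetaC, hcp]
    have h2πc : ((2*π:ℝ):ℂ) = 2 * (π:ℂ) := by push_cast; ring
    rw [h2πc]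
    field_simp

lemma measurable_cpowC (w : ℂ) : Measurable fun z => cpowC z w := by
  unfold cpowC
  exact Complex.measurable_exp.comp (measurable_const.mul
    (Complex.measurable_ofReal.comp (Real.measurable_log.comp
      ((continuous_norm.measurable).pow_const 2))))

lemma measurable_sak (s₁ s₂ t₁ t₂ u : ℂ) : Measurable (sakIntegrandC2 s₁ s₂ t₁ t₂ u) := by
  unfold sakIntegrandC2
  have mabs : Measurable fun z : ℂ => ‖z‖ ^ 2 :=
    (continuous_norm.measurable).pow_const 2
  have m1 : Measurable fun p : ℂ × ℂ × ℂ => ‖p.2.2‖ ^ 2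
      + ‖p.1‖ ^ 2 / ‖p.2.2‖ ^ 2
      + ‖p.2.1‖ ^ 2 / ‖p.1‖ ^ 2 :=
    ((mabs.comp (measurable_snd.snd)).add
      ((mabs.comp measurable_fst).div (mabs.comp measurable_snd.snd))).add
      ((mabs.comp measurable_snd.fst).div (mabs.comp measurable_fst))
  exact ((((measurable_cpowC _).comp measurable_fst).mul
      ((measurable_cpowC _).comp measurable_snd.fst)).mul
      ((measurable_cpowC _).comp measurable_snd.snd)).mul
    (Complex.measurable_ofReal.comp (Real.measurable_exp.comp (measurable_const.mul m1)))

/-- For `Re(s₁ + u) > 0`, `Re(s₂ + t₁ + u + 1/2) > 0`, `Re(s₂ + t₂ + u + 1/2) > 0`, the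
triple integral `∫∫∫ |g₁|_ℂ^{s₂-s₁+t₁+1/2} |g₂|_ℂ^{s₁+u} |c|_ℂ^{t₂-t₁}
  e^{-2π(|c|² + |g₁|²/|c|² + |g₂|²/|g₁|²)} d×c d×g₂ d×g₁` converges absolutely and
equals `ζ_ℂ(s₁+u) ζ_ℂ(s₂+t₁+u+1/2) ζ_ℂ(s₂+t₂+u+1/2)`. -/
theorem stmt_13 (t₁ t₂ u s₁ s₂ : ℂ) (h₁ : 0 < (s₁ + u).re)
    (h₂ : 0 < (s₂ + t₁ + u + 1 / 2).re) (h₃ : 0 < (s₂ + t₂ + u + 1 / 2).re) :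
    Integrable (sakIntegrandC2 s₁ s₂ t₁ t₂ u) (mulHaarC.prod (mulHaarC.prod mulHaarC)) ∧
      ∫ p : ℂ × ℂ × ℂ, sakIntegrandC2 s₁ s₂ t₁ t₂ u p
          ∂(mulHaarC.prod (mulHaarC.prod mulHaarC)) =
        zetaC (s₁ + u) * zetaC (s₂ + t₁ + u + 1 / 2) * zetaC (s₂ + t₂ + u + 1 / 2) := by
  set μ3 : Measure (ℂ × ℂ × ℂ) := mulHaarC.prod (mulHaarC.prod mulHaarC) with hμ3
  set wx : ℂ := s₁ + u with hwxd
  set wy : ℂ := (s₂ - s₁ + t₁ + 1 / 2) + (s₁ + u) with hwyd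
  set wc : ℂ := (s₂ - s₁ + t₁ + 1 / 2) + (s₁ + u) + (t₂ - t₁) with hwcd
  have hwy : 0 < wy.re := by
    have : wy = s₂ + t₁ + u + 1 / 2 := by rw [hwyd]; ring
    rw [this]; exact h₂
  have hwc : 0 < wc.re := by
    have : wc = s₂ + t₂ + u + 1 / 2 := by rw [hwcd]; ring
    rw [this]; exact h₃
  -- the measure preserving map
  set T : ℂ × ℂ × ℂ → ℂ × ℂ × ℂ := fun p => (p.2.2 * p.1, (p.2.2 * p.1 * p.2.1, p.2.2)) with hTd
  have hT : MeasurePreserving T μ3 μ3 := by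
    have hS₁ : MeasurePreserving (fun p : ℂ × ℂ × ℂ => (p.1, (p.1 * p.2.1, p.2.2))) μ3 μ3 := by
      refine MeasurePreserving.skew_product (MeasurePreserving.id mulHaarC)
        (g := fun (y : ℂ) (q : ℂ × ℂ) => (y * q.1, q.2)) ?_ ?_
      · exact (measurable_fst.mul measurable_snd.fst).prodMk measurable_snd.snd
      · filter_upwards [mulHaarC_ae_ne_zero] with y hy
        exact ((measurePreserving_mulC hy).prod (MeasurePreserving.id mulHaarC)).map_eq
    have hS₂ : MeasurePreserving (fun p : ℂ × ℂ × ℂ => (p.1, (p.1 * p.2.1, p.1 * p.2.2))) μ3 μ3 := by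
      refine MeasurePreserving.skew_product (MeasurePreserving.id mulHaarC)
        (g := fun (c : ℂ) (q : ℂ × ℂ) => (c * q.1, c * q.2)) ?_ ?_
      · exact (measurable_fst.mul measurable_snd.fst).prodMk
          (measurable_fst.mul measurable_snd.snd)
      · filter_upwards [mulHaarC_ae_ne_zero] with c hc
        exact ((measurePreserving_mulC hc).prod (measurePreserving_mulC hc)).map_eq
    have hτ : MeasurePreserving
        (⇑(MeasurableEquiv.prodAssoc (α := ℂ) (β := ℂ) (γ := ℂ)) ∘ Prod.swap) μ3 μ3 :=
      (measurePreserving_prodAssoc mulHaarC mulHaarC mulHaarC).comp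
        Measure.measurePreserving_swap
    have hcomp := ((hτ.comp hS₂).comp (hτ.comp hτ)).comp hS₁
    have hfun : ((((⇑(MeasurableEquiv.prodAssoc (α := ℂ) (β := ℂ) (γ := ℂ)) ∘ Prod.swap) ∘
          fun p : ℂ × ℂ × ℂ => (p.1, (p.1 * p.2.1, p.1 * p.2.2))) ∘
          (⇑(MeasurableEquiv.prodAssoc (α := ℂ) (β := ℂ) (γ := ℂ)) ∘ Prod.swap) ∘
            ⇑(MeasurableEquiv.prodAssoc (α := ℂ) (β := ℂ) (γ := ℂ)) ∘ Prod.swap) ∘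
          fun p : ℂ × ℂ × ℂ => (p.1, (p.1 * p.2.1, p.2.2))) = T := by
      funext p
      simp only [Function.comp_apply, MeasurableEquiv.prodAssoc, MeasurableEquiv.coe_mk,
        Equiv.prodAssoc_apply, Prod.swap_prod_mk, hTd, Prod.mk.injEq]
      refine ⟨trivial, ?_, trivial⟩
      ring
    rwa [hfun] at hcomp
  -- almost-everywhere nonvanishing of coordinates
  have h1 : ∀ᵐ p : ℂ × ℂ × ℂ ∂μ3, p.1 ≠ 0 := by
    rw [ae_iff]
    have hs : {p : ℂ × ℂ × ℂ | ¬ p.1 ≠ 0} = ({0} : Set ℂ) ×ˢ (univ : Set (ℂ × ℂ)) := by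
      ext ⟨a, b, c⟩; simp [Prod.ext_iff, eq_comm]
    rw [hs, hμ3, Measure.prod_prod, mulHaarC_null_singleton, zero_mul]
  have h2 : ∀ᵐ p : ℂ × ℂ × ℂ ∂μ3, p.2.1 ≠ 0 := by
    rw [ae_iff]
    have hs : {p : ℂ × ℂ × ℂ | ¬ p.2.1 ≠ 0}
        = (univ : Set ℂ) ×ˢ (({0} : Set ℂ) ×ˢ (univ : Set ℂ)) := by
      ext ⟨a, b, c⟩; simp [Prod.ext_iff, eq_comm]
    rw [hs, hμ3, Measure.prod_prod, Measure.prod_prod, mulHaarC_null_singleton, zero_mul, mul_zero]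
  have h3 : ∀ᵐ p : ℂ × ℂ × ℂ ∂μ3, p.2.2 ≠ 0 := by
    rw [ae_iff]
    have hs : {p : ℂ × ℂ × ℂ | ¬ p.2.2 ≠ 0}
        = (univ : Set ℂ) ×ˢ ((univ : Set ℂ) ×ˢ ({0} : Set ℂ)) := by
      ext ⟨a, b, c⟩; simp [Prod.ext_iff, eq_comm]
    rw [hs, hμ3, Measure.prod_prod, Measure.prod_prod, mulHaarC_null_singleton, mul_zero, mul_zero]
  -- the factored integrand
  set G : ℂ × ℂ × ℂ → ℂ := fun p => gI wy p.1 * (gI wx p.2.1 * gI wc p.2.2) with hGd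
  have hae : (fun p => sakIntegrandC2 s₁ s₂ t₁ t₂ u (T p)) =ᵐ[μ3] G := by
    filter_upwards [h1, h2, h3] with p hy hx hc
    set y := p.1; set x := p.2.1; set c := p.2.2
    have hay : ‖y‖ ≠ 0 := norm_ne_zero_iff.mpr hy
    have hax : ‖x‖ ≠ 0 := norm_ne_zero_iff.mpr hx
    have hac : ‖c‖ ≠ 0 := norm_ne_zero_iff.mpr hc
    have hacy : ‖(c * y)‖ ≠ 0 := norm_ne_zero_iff.mpr (mul_ne_zero hc hy)
    have la : Real.log (‖(c * y)‖ ^ 2)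
        = Real.log (‖c‖ ^ 2) + Real.log (‖y‖ ^ 2) := by
      rw [norm_mul, mul_pow, Real.log_mul (pow_ne_zero 2 hac) (pow_ne_zero 2 hay)]
    have lb : Real.log (‖(c * y * x)‖ ^ 2)
        = Real.log (‖c‖ ^ 2) + Real.log (‖y‖ ^ 2)
          + Real.log (‖x‖ ^ 2) := by
      rw [norm_mul, mul_pow, Real.log_mul (pow_ne_zero 2 hacy) (pow_ne_zero 2 hax), la]
    have d1 : ‖(c * y)‖ ^ 2 / ‖c‖ ^ 2 = ‖y‖ ^ 2 := by
      rw [norm_mul, mul_pow, mul_div_cancel_left₀ _ (pow_ne_zero 2 hac)]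
    have d2 : ‖(c * y * x)‖ ^ 2 / ‖(c * y)‖ ^ 2 = ‖x‖ ^ 2 := by
      rw [norm_mul (c*y) x, mul_pow, mul_div_cancel_left₀ _ (pow_ne_zero 2 hacy)]
    show sakIntegrandC2 s₁ s₂ t₁ t₂ u (c * y, (c * y * x, c)) = G p
    rw [hGd]
    unfold sakIntegrandC2 gI cpowC
    simp only [la, lb, d1, d2]
    simp only [Complex.ofReal_exp, ← Complex.exp_add]
    congr 1
    push_cast
    rw [hwyd, hwxd, hwcd]
    ring
  -- measurability
  have hmeas : Measurable (sakIntegrandC2 s₁ s₂ t₁ t₂ u) := measurable_sak s₁ s₂ t₁ t₂ u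
  -- integrability of G
  have hG : Integrable G μ3 := by
    have hx' := (gI_key h₁).1
    have hy' := (gI_key hwy).1
    have hc' := (gI_key hwc).1
    exact hy'.mul_prod (hx'.mul_prod hc')
  constructor
  · have hcompInt : Integrable (sakIntegrandC2 s₁ s₂ t₁ t₂ u ∘ T) μ3 :=
      hG.congr hae.symm
    exact (hT.integrable_comp hmeas.aestronglyMeasurable).mp hcompInt
  · calc ∫ p, sakIntegrandC2 s₁ s₂ t₁ t₂ u p ∂μ3
        = ∫ p, sakIntegrandC2 s₁ s₂ t₁ t₂ u p ∂(Measure.map T μ3) := by rw [hT.map_eq]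
      _ = ∫ p, sakIntegrandC2 s₁ s₂ t₁ t₂ u (T p) ∂μ3 :=
          integral_map hT.measurable.aemeasurable hmeas.aestronglyMeasurable
      _ = ∫ p, G p ∂μ3 := integral_congr_ae hae
      _ = (∫ z, gI wy z ∂mulHaarC) * ∫ q : ℂ × ℂ, gI wx q.1 * gI wc q.2
            ∂(mulHaarC.prod mulHaarC) := by
          rw [hμ3, hGd]
          exact integral_prod_mul (gI wy) (fun q : ℂ × ℂ => gI wx q.1 * gI wc q.2)
      _ = (∫ z, gI wy z ∂mulHaarC) * ((∫ z, gI wx z ∂mulHaarC) * ∫ z, gI wc z ∂mulHaarC) := by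
          rw [integral_prod_mul (gI wx) (gI wc)]
      _ = zetaC (s₁ + u) * zetaC (s₂ + t₁ + u + 1 / 2) * zetaC (s₂ + t₂ + u + 1 / 2) := by
          rw [(gI_key hwy).2, (gI_key h₁).2, (gI_key hwc).2]
          have e1 : wy = s₂ + t₁ + u + 1 / 2 := by rw [hwyd]; ring
          have e2 : wc = s₂ + t₂ + u + 1 / 2 := by rw [hwcd]; ring
          rw [e1, e2, hwxd]
          ring
end
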